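/- arXiv:math/0405453 — 5 statements merged into one kernel-verified Lean document; each statement's English description precedes it below -/
import Mathlib

section
/- Let f ∈ K[[x_1,…,x_n]] have order m at 0, and let f' be its strict transform under the chart substitution (x_1,…,x_n) ↦ (x_1, x_1(a_2+x_2),…,x_1(a_n+x_n)), so f(x_1, x_1(a_2+x_2),…) = x_1^m f'(x). Then for every multi-index α with |α| ≤ k ≤ m, the substituted partial derivative (∂^{|α|} f/∂x^α)(x_1, x_1(a_2+x_2),…,x_1(a_n+x_n)) belongs to the ideal x_1^{m−k}·J'_k, where J'_k is the ideal of K[[x]] generated by all partial derivatives of f' of order ≤ k. -/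
open scoped Classical

noncomputable def deg {σ : Type} [Fintype σ] (α : σ →₀ ℕ) : ℕ := ∑ i, α i

noncomputable def expBox (σ : Type) [Fintype σ] [DecidableEq σ] (D : ℕ) : Finset (σ →₀ ℕ) :=
  Finset.Iic (Finsupp.equivFunOnFinite.symm fun _ => D)


noncomputable def mySubst {K : Type} [Field K] {σ τ : Type} [Fintype σ] [DecidableEq σ]
    [Fintype τ] (s : σ → MvPowerSeries τ K) (f : MvPowerSeries σ K) : MvPowerSeries τ K :=
  fun β => ∑ α ∈ expBox σ (deg β),
    MvPowerSeries.coeff α f * MvPowerSeries.coeff β (∏ i, s i ^ α i)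

/-- Iterated formal partial derivative `∂^{|a|} f / ∂x^a`. -/
noncomputable def pdMulti {K : Type} [Field K] {σ : Type} [Fintype σ] (a : σ →₀ ℕ)
    (f : MvPowerSeries σ K) : MvPowerSeries σ K :=
  fun β => (((∏ i, Nat.choose (β i + a i) (a i) * Nat.factorial (a i)) : ℕ) : K) *
    MvPowerSeries.coeff (β + a) f

/-- The blow-up chart substitution `x₁ ↦ x₁`, `x_j ↦ x₁·(a_j + x_j)`. -/
noncomputable def chartS {K : Type} [Field K] {n : ℕ} (a : Fin n → K) :
    Fin (n + 1) → MvPowerSeries (Fin (n + 1)) K := fun j =>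
  Fin.cases (MvPowerSeries.X 0)
    (fun k => MvPowerSeries.X 0 *
      ((MvPowerSeries.C (a k) : MvPowerSeries (Fin (n + 1)) K) + MvPowerSeries.X k.succ)) j

namespace Aux
set_option linter.unusedSectionVars false

open MvPowerSeries Finset

variable {K : Type} [Field K] {σ : Type} [Fintype σ] [DecidableEq σ]

theorem deg_add (α β : σ →₀ ℕ) : deg (α + β) = deg α + deg β := by
  simp [deg, Finset.sum_add_distrib]

theorem deg_single (j : σ) (n : ℕ) : deg (Finsupp.single j n) = n := by
  simp [deg, Finsupp.single_apply]

theorem deg_zero : deg (0 : σ →₀ ℕ) = 0 := by simp [deg]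

theorem eq_zero_of_deg_eq_zero {α : σ →₀ ℕ} (h : deg α = 0) : α = 0 := by
  ext i
  have := Finset.sum_eq_zero_iff.mp h i (Finset.mem_univ i)
  simpa using this

theorem le_deg {α : σ →₀ ℕ} (i : σ) : α i ≤ deg α :=
  Finset.single_le_sum (fun _ _ => Nat.zero_le _) (Finset.mem_univ i)

theorem deg_mono {α β : σ →₀ ℕ} (h : α ≤ β) : deg α ≤ deg β :=
  Finset.sum_le_sum fun i _ => h i

theorem mem_expBox {α : σ →₀ ℕ} {D : ℕ} : α ∈ expBox σ D ↔ ∀ i, α i ≤ D := by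
  simp only [expBox, Finset.mem_Iic]
  rw [Finsupp.le_def]
  constructor <;> intro h i <;> simpa using h i

theorem expBox_mono {D₁ D₂ : ℕ} (h : D₁ ≤ D₂) : expBox σ D₁ ⊆ expBox σ D₂ := by
  intro α hα
  rw [mem_expBox] at *
  exact fun i => (hα i).trans h

/-- Single formal partial derivative. -/
noncomputable def D (j : σ) (f : MvPowerSeries σ K) : MvPowerSeries σ K :=
  fun β => ((β j + 1 : ℕ) : K) * MvPowerSeries.coeff (β + Finsupp.single j 1) f

theorem coeff_D (j : σ) (f : MvPowerSeries σ K) (β : σ →₀ ℕ) :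
    MvPowerSeries.coeff β (D j f) =
      ((β j + 1 : ℕ) : K) * MvPowerSeries.coeff (β + Finsupp.single j 1) f := rfl

theorem D_add (j : σ) (f g : MvPowerSeries σ K) : D j (f + g) = D j f + D j g := by
  ext β
  show ((β j + 1 : ℕ) : K) * MvPowerSeries.coeff (β + Finsupp.single j 1) (f + g) = _
  rw [map_add, mul_add]
  rfl

theorem D_smul (j : σ) (c : K) (f : MvPowerSeries σ K) : D j (c • f) = c • D j f := by
  ext β
  show ((β j + 1 : ℕ) : K) * MvPowerSeries.coeff (β + Finsupp.single j 1) (c • f) = _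
  rw [MvPowerSeries.coeff_smul]
  show _ = c * D j f β
  rw [D]
  ring

/-- `D` as a linear map. -/
noncomputable def Dl (j : σ) : MvPowerSeries σ K →ₗ[K] MvPowerSeries σ K where
  toFun := D j
  map_add' := D_add j
  map_smul' := D_smul j

theorem Dl_apply (j : σ) (f : MvPowerSeries σ K) : Dl j f = D j f := rfl

theorem D_one (j : σ) : D j (1 : MvPowerSeries σ K) = 0 := by
  ext β
  rw [coeff_D]
  have : β + Finsupp.single j 1 ≠ 0 := by
    intro h
    have := DFunLike.congr_fun h j
    simp [Finsupp.single_apply] at this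
  rw [MvPowerSeries.coeff_one]
  simp [this]

theorem D_C (j : σ) (c : K) : D j (MvPowerSeries.C c) = 0 := by
  have : (MvPowerSeries.C c) = c • (1 : MvPowerSeries σ K) := by
    rw [smul_eq_C_mul, mul_one]
  rw [this, D_smul, D_one, smul_zero]


theorem sum_antidiag_shift (β : σ →₀ ℕ) (j : σ) (F : (σ →₀ ℕ) × (σ →₀ ℕ) → K) :
    ∑ p ∈ Finset.HasAntidiagonal.antidiagonal β, F (p.1 + Finsupp.single j 1, p.2)
      = ∑ q ∈ (Finset.HasAntidiagonal.antidiagonal (β + Finsupp.single j 1)).filter (fun q => q.1 j ≠ 0), F q := by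
  refine Finset.sum_nbij' (i := fun p => (p.1 + Finsupp.single j 1, p.2))
    (j := fun q => (q.1 - Finsupp.single j 1, q.2)) ?_ ?_ ?_ ?_ ?_
  · intro p hp
    rw [Finset.HasAntidiagonal.mem_antidiagonal] at hp
    rw [Finset.mem_filter, Finset.HasAntidiagonal.mem_antidiagonal]
    refine ⟨by rw [← hp, add_right_comm], ?_⟩
    simp [Finsupp.add_apply, Finsupp.single_apply]
  · intro q hq
    rw [Finset.mem_filter, Finset.HasAntidiagonal.mem_antidiagonal] at hq
    obtain ⟨hsum, hne⟩ := hq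
    have he : Finsupp.single j 1 ≤ q.1 :=
      Finsupp.single_le_iff.mpr (Nat.one_le_iff_ne_zero.mpr hne)
    rw [Finset.HasAntidiagonal.mem_antidiagonal]
    have h1 : q.1 - Finsupp.single j 1 + Finsupp.single j 1 = q.1 := tsub_add_cancel_of_le he
    have : (q.1 - Finsupp.single j 1 + q.2) + Finsupp.single j 1 = β + Finsupp.single j 1 := by
      rw [add_right_comm, h1, hsum]
    exact add_right_cancel this
  · intro p _
    simp [add_tsub_cancel_right]
  · intro q hq
    rw [Finset.mem_filter, Finset.HasAntidiagonal.mem_antidiagonal] at hq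
    have he : Finsupp.single j 1 ≤ q.1 :=
      Finsupp.single_le_iff.mpr (Nat.one_le_iff_ne_zero.mpr hq.2)
    simp [tsub_add_cancel_of_le he]
  · intro p _
    rfl

theorem sum_antidiag_shift₂ (β : σ →₀ ℕ) (j : σ) (F : (σ →₀ ℕ) × (σ →₀ ℕ) → K) :
    ∑ p ∈ Finset.HasAntidiagonal.antidiagonal β, F (p.1, p.2 + Finsupp.single j 1)
      = ∑ q ∈ (Finset.HasAntidiagonal.antidiagonal (β + Finsupp.single j 1)).filter (fun q => q.2 j ≠ 0), F q := by
  refine Finset.sum_nbij' (i := fun p => (p.1, p.2 + Finsupp.single j 1))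
    (j := fun q => (q.1, q.2 - Finsupp.single j 1)) ?_ ?_ ?_ ?_ ?_
  · intro p hp
    rw [Finset.HasAntidiagonal.mem_antidiagonal] at hp
    rw [Finset.mem_filter, Finset.HasAntidiagonal.mem_antidiagonal]
    refine ⟨by rw [← hp, add_assoc], ?_⟩
    simp [Finsupp.add_apply, Finsupp.single_apply]
  · intro q hq
    rw [Finset.mem_filter, Finset.HasAntidiagonal.mem_antidiagonal] at hq
    obtain ⟨hsum, hne⟩ := hq
    have he : Finsupp.single j 1 ≤ q.2 :=
      Finsupp.single_le_iff.mpr (Nat.one_le_iff_ne_zero.mpr hne)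
    rw [Finset.HasAntidiagonal.mem_antidiagonal]
    have h1 : q.2 - Finsupp.single j 1 + Finsupp.single j 1 = q.2 := tsub_add_cancel_of_le he
    have : (q.1 + (q.2 - Finsupp.single j 1)) + Finsupp.single j 1 = β + Finsupp.single j 1 := by
      rw [add_assoc, h1, hsum]
    exact add_right_cancel this
  · intro p _
    simp [add_tsub_cancel_right]
  · intro q hq
    rw [Finset.mem_filter, Finset.HasAntidiagonal.mem_antidiagonal] at hq
    have he : Finsupp.single j 1 ≤ q.2 :=
      Finsupp.single_le_iff.mpr (Nat.one_le_iff_ne_zero.mpr hq.2)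
    simp [tsub_add_cancel_of_le he]
  · intro p _
    rfl

theorem D_mul (j : σ) (f g : MvPowerSeries σ K) :
    D j (f * g) = D j f * g + f * D j g := by
  ext β
  set e := Finsupp.single j 1 with he
  rw [map_add, coeff_D, MvPowerSeries.coeff_mul, MvPowerSeries.coeff_mul,
    MvPowerSeries.coeff_mul]
  set G₁ : (σ →₀ ℕ) × (σ →₀ ℕ) → K := fun q =>
    ((q.1 j : ℕ) : K) * (MvPowerSeries.coeff q.1 f * MvPowerSeries.coeff q.2 g) with hG₁
  set G₂ : (σ →₀ ℕ) × (σ →₀ ℕ) → K := fun q =>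
    ((q.2 j : ℕ) : K) * (MvPowerSeries.coeff q.1 f * MvPowerSeries.coeff q.2 g) with hG₂
  have step1 : ∑ p ∈ Finset.HasAntidiagonal.antidiagonal β,
      MvPowerSeries.coeff p.1 (D j f) * MvPowerSeries.coeff p.2 g
      = ∑ q ∈ Finset.HasAntidiagonal.antidiagonal (β + e), G₁ q := by
    have : ∑ p ∈ Finset.HasAntidiagonal.antidiagonal β,
        MvPowerSeries.coeff p.1 (D j f) * MvPowerSeries.coeff p.2 g
        = ∑ p ∈ Finset.HasAntidiagonal.antidiagonal β, G₁ (p.1 + e, p.2) := by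
      refine Finset.sum_congr rfl fun p _ => ?_
      rw [coeff_D, hG₁]
      have : (p.1 + e) j = p.1 j + 1 := by
        simp [he, Finsupp.add_apply, Finsupp.single_apply]
      simp only [this]
      ring
    rw [this, sum_antidiag_shift]
    refine Finset.sum_filter_of_ne fun q hq hne => ?_
    intro h0
    apply hne
    rw [hG₁]
    simp [h0]
  have step2 : ∑ p ∈ Finset.HasAntidiagonal.antidiagonal β,
      MvPowerSeries.coeff p.1 f * MvPowerSeries.coeff p.2 (D j g)
      = ∑ q ∈ Finset.HasAntidiagonal.antidiagonal (β + e), G₂ q := by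
    have : ∑ p ∈ Finset.HasAntidiagonal.antidiagonal β,
        MvPowerSeries.coeff p.1 f * MvPowerSeries.coeff p.2 (D j g)
        = ∑ p ∈ Finset.HasAntidiagonal.antidiagonal β, G₂ (p.1, p.2 + e) := by
      refine Finset.sum_congr rfl fun p _ => ?_
      rw [coeff_D, hG₂]
      have : (p.2 + e) j = p.2 j + 1 := by
        simp [he, Finsupp.add_apply, Finsupp.single_apply]
      simp only [this]
      ring
    rw [this, sum_antidiag_shift₂]
    refine Finset.sum_filter_of_ne fun q hq hne => ?_
    intro h0
    apply hne
    rw [hG₂]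
    simp [h0]
  rw [step1, step2, ← Finset.sum_add_distrib, Finset.mul_sum]
  refine Finset.sum_congr rfl fun q hq => ?_
  rw [Finset.HasAntidiagonal.mem_antidiagonal] at hq
  have hj : q.1 j + q.2 j = β j + 1 := by
    have := DFunLike.congr_fun hq j
    simpa [he, Finsupp.add_apply, Finsupp.single_apply] using this
  rw [hG₁, hG₂]
  have : ((β j + 1 : ℕ) : K) = ((q.1 j : ℕ) : K) + ((q.2 j : ℕ) : K) := by
    rw [← Nat.cast_add, hj]
  rw [this]
  ring

theorem D_pow (j : σ) (f : MvPowerSeries σ K) (k : ℕ) :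
    D j (f ^ k) = k • (f ^ (k - 1) * D j f) := by
  induction k with
  | zero => simp [D_one]
  | succ k ih =>
    rw [pow_succ, D_mul, ih]
    cases k with
    | zero => simp
    | succ k =>
      have h1 : f ^ (k + 1 - 1) * D j f * f = f ^ (k + 1) * D j f := by
        rw [Nat.add_sub_cancel, mul_right_comm, ← pow_succ]
      rw [smul_mul_assoc, h1, ← succ_nsmul, Nat.add_sub_cancel]

theorem D_prod {ι : Type*} (j : σ) (t : Finset ι) (p : ι → MvPowerSeries σ K) :
    D j (∏ i ∈ t, p i) = ∑ i ∈ t, (∏ i' ∈ t.erase i, p i') * D j (p i) := by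
  classical
  induction t using Finset.induction_on with
  | empty => simp [D_one]
  | insert x s hx ih =>
    rw [Finset.prod_insert hx, D_mul, ih, Finset.sum_insert hx, Finset.erase_insert hx]
    rw [Finset.mul_sum]
    congr 1
    · ring
    · refine Finset.sum_congr rfl fun i hi => ?_
      have hxi : x ≠ i := fun h => hx (h ▸ hi)
      rw [Finset.erase_insert_of_ne hxi,
        Finset.prod_insert (fun h => hx (Finset.mem_of_mem_erase h))]
      ring

/-- order ≥ L -/
def OrdGe (L : ℕ) (g : MvPowerSeries σ K) : Prop :=
  ∀ β, deg β < L → MvPowerSeries.coeff β g = 0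

theorem ordGe_zero (g : MvPowerSeries σ K) : OrdGe 0 g := fun _ h => absurd h (Nat.not_lt_zero _)

theorem ordGe_mul {L M : ℕ} {f g : MvPowerSeries σ K} (hf : OrdGe L f) (hg : OrdGe M g) :
    OrdGe (L + M) (f * g) := by
  intro β hβ
  rw [MvPowerSeries.coeff_mul]
  refine Finset.sum_eq_zero fun p hp => ?_
  rw [Finset.HasAntidiagonal.mem_antidiagonal] at hp
  have hdeg : deg p.1 + deg p.2 = deg β := by rw [← deg_add, hp]
  by_cases h1 : deg p.1 < L
  · rw [hf _ h1, zero_mul]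
  · have : deg p.2 < M := by omega
    rw [hg _ this, mul_zero]

theorem ordGe_X (i : σ) : OrdGe 1 (MvPowerSeries.X i : MvPowerSeries σ K) := by
  intro β hβ
  rw [MvPowerSeries.coeff_X]
  have : β ≠ Finsupp.single i 1 := by
    intro h
    rw [h, deg_single] at hβ
    omega
  simp [this]

theorem ordGe_pow {L : ℕ} {f : MvPowerSeries σ K} (hf : OrdGe L f) (k : ℕ) :
    OrdGe (k * L) (f ^ k) := by
  induction k with
  | zero =>
    simp only [Nat.zero_mul, pow_zero]
    exact ordGe_zero 1
  | succ k ih =>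
    have := ordGe_mul ih hf
    rw [pow_succ]
    have heq : k * L + L = (k + 1) * L := by ring
    rw [heq] at this
    exact this

/-- `∏ i, s i ^ α i` -/
noncomputable def monProd {τ : Type} [Fintype τ] (s : σ → MvPowerSeries τ K) (α : σ →₀ ℕ) :
    MvPowerSeries τ K := ∏ i, s i ^ α i

theorem ordGe_monProd {τ : Type} [Fintype τ] [DecidableEq τ] (s : σ → MvPowerSeries τ K)
    (hs : ∀ i, OrdGe 1 (s i)) (α : σ →₀ ℕ) : OrdGe (deg α) (monProd s α) := by
  have : ∀ (t : Finset σ), OrdGe (∑ i ∈ t, α i) (∏ i ∈ t, s i ^ α i) := by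
    intro t
    induction t using Finset.induction_on with
    | empty => simpa using ordGe_zero (1 : MvPowerSeries τ K)
    | insert x u hx ih =>
      rw [Finset.prod_insert hx, Finset.sum_insert hx]
      have hp : OrdGe (α x * 1) ((s x) ^ (α x)) := ordGe_pow (hs x) (α x)
      rw [Nat.mul_one] at hp
      exact ordGe_mul hp ih
  exact this Finset.univ

variable {τ : Type} [Fintype τ] [DecidableEq τ]

theorem coeff_mySubst (s : σ → MvPowerSeries τ K) (f : MvPowerSeries σ K) (β : τ →₀ ℕ) :
    MvPowerSeries.coeff β (mySubst s f) =
      ∑ α ∈ expBox σ (deg β),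
        MvPowerSeries.coeff α f * MvPowerSeries.coeff β (monProd s α) := rfl

theorem mySubst_add (s : σ → MvPowerSeries τ K) (f g : MvPowerSeries σ K) :
    mySubst s (f + g) = mySubst s f + mySubst s g := by
  ext β
  show MvPowerSeries.coeff β (mySubst s (f+g)) = _
  rw [coeff_mySubst]
  have : ∀ α, MvPowerSeries.coeff α (f + g) =
      MvPowerSeries.coeff α f + MvPowerSeries.coeff α g := fun α => map_add _ _ _
  calc ∑ α ∈ expBox σ (deg β), MvPowerSeries.coeff α (f+g) *
        MvPowerSeries.coeff β (monProd s α)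
      = ∑ α ∈ expBox σ (deg β), (MvPowerSeries.coeff α f * MvPowerSeries.coeff β (monProd s α)
        + MvPowerSeries.coeff α g * MvPowerSeries.coeff β (monProd s α)) := by
        refine Finset.sum_congr rfl fun α _ => ?_
        rw [this α]; ring
    _ = _ := by
        rw [Finset.sum_add_distrib]
        rfl

theorem mySubst_smul (s : σ → MvPowerSeries τ K) (c : K) (f : MvPowerSeries σ K) :
    mySubst s (c • f) = c • mySubst s f := by
  ext β
  show MvPowerSeries.coeff β (mySubst s (c • f)) = _
  rw [coeff_mySubst, MvPowerSeries.coeff_smul, coeff_mySubst, Finset.mul_sum]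
  refine Finset.sum_congr rfl fun α _ => ?_
  rw [MvPowerSeries.coeff_smul]
  ring

/-- `mySubst` as a linear map. -/
noncomputable def mySubstl (s : σ → MvPowerSeries τ K) :
    MvPowerSeries σ K →ₗ[K] MvPowerSeries τ K where
  toFun := mySubst s
  map_add' := mySubst_add s
  map_smul' := mySubst_smul s

theorem mySubstl_apply (s : σ → MvPowerSeries τ K) (f : MvPowerSeries σ K) :
    mySubstl s f = mySubst s f := rfl

theorem mySubst_monomial (s : σ → MvPowerSeries τ K) (hs : ∀ i, OrdGe 1 (s i))
    (α : σ →₀ ℕ) (c : K) :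
    mySubst s (MvPowerSeries.monomial α c) = c • monProd s α := by
  ext β
  show MvPowerSeries.coeff β (mySubst s _) = _
  rw [coeff_mySubst, MvPowerSeries.coeff_smul]
  by_cases hmem : α ∈ expBox σ (deg β)
  · rw [Finset.sum_eq_single α]
    · rw [MvPowerSeries.coeff_monomial_same]
    · intro b _ hb
      rw [MvPowerSeries.coeff_monomial_ne hb, zero_mul]
    · intro h
      exact absurd hmem h
  · have hzero : MvPowerSeries.coeff β (monProd s α) = 0 := by
      apply ordGe_monProd s hs α
      rw [mem_expBox] at hmem
      push_neg at hmem
      obtain ⟨i, hi⟩ := hmem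
      calc deg β < α i := hi
        _ ≤ deg α := le_deg i
    rw [hzero, mul_zero]
    refine Finset.sum_eq_zero fun b hb => ?_
    rcases eq_or_ne b α with rfl | hne
    · exact absurd hb hmem
    · rw [MvPowerSeries.coeff_monomial_ne hne, zero_mul]

theorem D_X_same (t : σ) : D t (MvPowerSeries.X t : MvPowerSeries σ K) = 1 := by
  ext β
  rw [coeff_D, MvPowerSeries.coeff_X, MvPowerSeries.coeff_one]
  rcases eq_or_ne β 0 with rfl | hβ
  · simp
  · have h1 : β + Finsupp.single t 1 ≠ Finsupp.single t 1 := by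
      intro h
      exact hβ (add_right_cancel (h.trans (zero_add _).symm))
    rw [if_neg h1, if_neg hβ, mul_zero]

theorem D_X_ne {t i : σ} (hne : t ≠ i) :
    D t (MvPowerSeries.X i : MvPowerSeries σ K) = 0 := by
  ext β
  rw [coeff_D, MvPowerSeries.coeff_X]
  have h1 : β + Finsupp.single t 1 ≠ Finsupp.single i 1 := by
    intro h
    have := DFunLike.congr_fun h t
    rw [Finsupp.add_apply, Finsupp.single_apply, Finsupp.single_apply, if_pos rfl,
      if_neg hne.symm] at this
    omega
  rw [if_neg h1, mul_zero]
  simp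

theorem D_monProd (s : σ → MvPowerSeries τ K) (t : τ) (α : σ →₀ ℕ) :
    D t (monProd s α) =
      ∑ i, α i • (monProd s (α - Finsupp.single i 1) * D t (s i)) := by
  rw [monProd, D_prod]
  refine Finset.sum_congr rfl fun i _ => ?_
  rw [D_pow]
  rcases Nat.eq_zero_or_pos (α i) with h0 | hpos
  · rw [h0]
    simp
  · have hm : monProd s (α - Finsupp.single i 1)
        = s i ^ (α i - 1) * ∏ i' ∈ Finset.univ.erase i, s i' ^ α i' := by
      rw [monProd, ← Finset.mul_prod_erase Finset.univ _ (Finset.mem_univ i)]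
      congr 1
      · congr 1
        rw [Finsupp.tsub_apply, Finsupp.single_apply, if_pos rfl]
      · refine Finset.prod_congr rfl fun i' hi' => ?_
        have hne : i' ≠ i := Finset.ne_of_mem_erase hi'
        congr 1
        rw [Finsupp.tsub_apply, Finsupp.single_apply, if_neg (Ne.symm hne), Nat.sub_zero]
    rw [hm, nsmul_eq_mul, nsmul_eq_mul, mul_left_comm]
    congr 1
    rw [mul_left_comm, ← mul_assoc]
    congr 1
    congr 1
    apply Finset.prod_congr _ fun _ _ => rfl
    ext x
    simp [Finset.mem_erase]

theorem D_monomial (i : σ) (α : σ →₀ ℕ) (c : K) :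
    D i (MvPowerSeries.monomial α c) =
      MvPowerSeries.monomial (α - Finsupp.single i 1) ((α i : K) * c) := by
  ext β
  rw [coeff_D, MvPowerSeries.coeff_monomial (β + Finsupp.single i 1) α,
    MvPowerSeries.coeff_monomial β (α - Finsupp.single i 1)]
  by_cases hcase : β + Finsupp.single i 1 = α
  · rw [if_pos hcase, if_pos (by rw [← hcase, add_tsub_cancel_right])]
    have hα : α i = β i + 1 := by
      rw [← hcase, Finsupp.add_apply, Finsupp.single_apply, if_pos rfl]
    rw [hα]
  · rw [if_neg hcase, mul_zero]
    by_cases h2 : β = α - Finsupp.single i 1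
    · rcases Nat.eq_zero_or_pos (α i) with h0 | hpos
      · rw [if_pos h2, h0]
        simp
      · exfalso
        apply hcase
        rw [h2, tsub_add_cancel_of_le (Finsupp.single_le_iff.mpr hpos)]
    · rw [if_neg h2]

theorem chainRule_monomial (s : σ → MvPowerSeries τ K) (hs : ∀ i, OrdGe 1 (s i)) (t : τ)
    (α : σ →₀ ℕ) (c : K) :
    D t (mySubst s (MvPowerSeries.monomial α c)) =
      ∑ i, mySubst s (D i (MvPowerSeries.monomial α c)) * D t (s i) := by
  rw [mySubst_monomial s hs, D_smul, D_monProd, Finset.smul_sum]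
  refine Finset.sum_congr rfl fun i _ => ?_
  rw [D_monomial, mySubst_monomial s hs, smul_mul_assoc]
  rw [← Nat.cast_smul_eq_nsmul K (α i), smul_comm c ((α i : K)), smul_smul]

theorem coeff_mySubst_congr {s : σ → MvPowerSeries τ K} {f g : MvPowerSeries σ K} {M : ℕ}
    (h : ∀ α ∈ expBox σ M, MvPowerSeries.coeff α f = MvPowerSeries.coeff α g)
    {γ : τ →₀ ℕ} (hγ : deg γ ≤ M) :
    MvPowerSeries.coeff γ (mySubst s f) = MvPowerSeries.coeff γ (mySubst s g) := by
  rw [coeff_mySubst, coeff_mySubst]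
  refine Finset.sum_congr rfl fun α hα => ?_
  rw [h α (expBox_mono hγ hα)]

theorem chainRule (s : σ → MvPowerSeries τ K) (hs : ∀ i, OrdGe 1 (s i)) (t : τ)
    (f : MvPowerSeries σ K) :
    D t (mySubst s f) = ∑ i, mySubst s (D i f) * D t (s i) := by
  ext β
  set M := deg β + 1 with hM
  set F : MvPowerSeries σ K := ∑ α' ∈ expBox σ M,
    MvPowerSeries.monomial α' (MvPowerSeries.coeff α' f) with hF
  have hagree : ∀ α ∈ expBox σ M, MvPowerSeries.coeff α f = MvPowerSeries.coeff α F := by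
    intro α hα
    rw [hF, map_sum, Finset.sum_eq_single α]
    · rw [MvPowerSeries.coeff_monomial_same]
    · intro b _ hb
      exact MvPowerSeries.coeff_monomial_ne (Ne.symm hb) _
    · intro hmem
      exact absurd hα hmem
  have hL : MvPowerSeries.coeff β (D t (mySubst s f))
      = MvPowerSeries.coeff β (D t (mySubst s F)) := by
    rw [coeff_D, coeff_D]
    congr 1
    refine coeff_mySubst_congr hagree ?_
    rw [deg_add, deg_single]
  have hR : ∀ i : σ, MvPowerSeries.coeff β (mySubst s (D i f) * D t (s i))
      = MvPowerSeries.coeff β (mySubst s (D i F) * D t (s i)) := by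
    intro i
    rw [MvPowerSeries.coeff_mul, MvPowerSeries.coeff_mul]
    refine Finset.sum_congr rfl fun p hp => ?_
    congr 1
    refine coeff_mySubst_congr (M := deg β) ?_ ?_
    · intro α hα
      rw [coeff_D, coeff_D]
      congr 1
      refine hagree _ ?_
      rw [mem_expBox] at hα ⊢
      intro i'
      rcases eq_or_ne i' i with rfl | hne
      · rw [Finsupp.add_apply, Finsupp.single_apply, if_pos rfl, hM]
        exact Nat.add_le_add_right (hα i') 1
      · rw [Finsupp.add_apply, Finsupp.single_apply, if_neg (Ne.symm hne), Nat.add_zero, hM]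
        exact (hα i').trans (Nat.le_succ _)
    · rw [Finset.HasAntidiagonal.mem_antidiagonal] at hp
      have : p.1 ≤ β := le_iff_exists_add.mpr ⟨p.2, hp.symm⟩
      exact deg_mono this
  have hFchain : D t (mySubst s F) = ∑ i, mySubst s (D i F) * D t (s i) := by
    have e1 : mySubst s F = ∑ α' ∈ expBox σ M,
        mySubst s (MvPowerSeries.monomial α' (MvPowerSeries.coeff α' f)) := by
      rw [show mySubst s F = mySubstl s F from rfl, hF, map_sum]
      rfl
    have e2 : D t (mySubst s F) = ∑ α' ∈ expBox σ M,
        D t (mySubst s (MvPowerSeries.monomial α' (MvPowerSeries.coeff α' f))) := by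
      rw [e1, show D t (∑ α' ∈ expBox σ M,
        mySubst s (MvPowerSeries.monomial α' (MvPowerSeries.coeff α' f)))
        = Dl t (∑ α' ∈ expBox σ M,
        mySubst s (MvPowerSeries.monomial α' (MvPowerSeries.coeff α' f))) from rfl, map_sum]
      rfl
    rw [e2]
    have e3 : ∀ α' ∈ expBox σ M,
        D t (mySubst s (MvPowerSeries.monomial α' (MvPowerSeries.coeff α' f)))
        = ∑ i, mySubst s (D i (MvPowerSeries.monomial α' (MvPowerSeries.coeff α' f)))
            * D t (s i) :=
      fun α' _ => chainRule_monomial s hs t α' _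
    rw [Finset.sum_congr rfl e3, Finset.sum_comm]
    refine Finset.sum_congr rfl fun i _ => ?_
    rw [← Finset.sum_mul]
    congr 1
    have e4 : D i F = ∑ α' ∈ expBox σ M,
        D i (MvPowerSeries.monomial α' (MvPowerSeries.coeff α' f)) := by
      rw [show D i F = Dl i F from rfl, hF, map_sum]
      rfl
    rw [e4, show mySubst s (∑ α' ∈ expBox σ M,
        D i (MvPowerSeries.monomial α' (MvPowerSeries.coeff α' f)))
      = mySubstl s (∑ α' ∈ expBox σ M,
        D i (MvPowerSeries.monomial α' (MvPowerSeries.coeff α' f))) from rfl, map_sum]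
    rfl
  rw [hL, hFchain]
  rw [map_sum, map_sum]
  exact (Finset.sum_congr rfl fun i _ => (hR i).symm)

theorem coeff_pdMulti (a : σ →₀ ℕ) (f : MvPowerSeries σ K) (β : σ →₀ ℕ) :
    MvPowerSeries.coeff β (pdMulti a f) =
      (((∏ i, Nat.choose (β i + a i) (a i) * Nat.factorial (a i)) : ℕ) : K) *
        MvPowerSeries.coeff (β + a) f := rfl

theorem pdMulti_zero (f : MvPowerSeries σ K) : pdMulti 0 f = f := by
  ext β
  rw [coeff_pdMulti]
  simp

theorem nat_key (a b : ℕ) :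
    Nat.choose (b + (a + 1)) (a + 1) * Nat.factorial (a + 1)
      = (b + 1) * (Nat.choose ((b + 1) + a) a * Nat.factorial a) := by
  apply Nat.eq_of_mul_eq_mul_right (Nat.factorial_pos b)
  have h1 : Nat.choose (b + (a + 1)) (a + 1) * Nat.factorial (a + 1) * Nat.factorial b
      = Nat.factorial (b + (a + 1)) := by
    have := Nat.choose_mul_factorial_mul_factorial (n := b + (a + 1)) (k := a + 1) (by omega)
    simpa [show b + (a + 1) - (a + 1) = b by omega] using this
  have h2 : Nat.choose ((b + 1) + a) a * Nat.factorial a * Nat.factorial (b + 1)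
      = Nat.factorial ((b + 1) + a) := by
    have := Nat.choose_mul_factorial_mul_factorial (n := (b + 1) + a) (k := a) (by omega)
    simpa [show (b + 1) + a - a = b + 1 by omega] using this
  calc Nat.choose (b + (a + 1)) (a + 1) * Nat.factorial (a + 1) * Nat.factorial b
      = Nat.factorial (b + (a + 1)) := h1
    _ = Nat.factorial ((b + 1) + a) := by rw [show b + (a + 1) = (b + 1) + a by omega]
    _ = Nat.choose ((b + 1) + a) a * Nat.factorial a * Nat.factorial (b + 1) := h2.symm
    _ = (b + 1) * (Nat.choose ((b + 1) + a) a * Nat.factorial a) * Nat.factorial b := by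
        rw [Nat.factorial_succ]
        ring

theorem pdMulti_add_single (a : σ →₀ ℕ) (j : σ) (f : MvPowerSeries σ K) :
    pdMulti (a + Finsupp.single j 1) f = D j (pdMulti a f) := by
  ext β
  rw [coeff_D, coeff_pdMulti, coeff_pdMulti]
  set γ : σ →₀ ℕ := a + Finsupp.single j 1 with hγ
  set δ : σ →₀ ℕ := β + Finsupp.single j 1 with hδ
  have hj1 : γ j = a j + 1 := by
    rw [hγ, Finsupp.add_apply, Finsupp.single_apply, if_pos rfl]
  have hj2 : δ j = β j + 1 := by
    rw [hδ, Finsupp.add_apply, Finsupp.single_apply, if_pos rfl]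
  have key : (∏ i, Nat.choose (β i + γ i) (γ i) * Nat.factorial (γ i))
      = (β j + 1) * ∏ i, Nat.choose (δ i + a i) (a i) * Nat.factorial (a i) := by
    rw [← Finset.mul_prod_erase Finset.univ _ (Finset.mem_univ j),
      ← Finset.mul_prod_erase Finset.univ
        (fun i => Nat.choose (δ i + a i) (a i) * Nat.factorial (a i))
        (Finset.mem_univ j)]
    have herase : (∏ i ∈ Finset.univ.erase j,
          Nat.choose (β i + γ i) (γ i) * Nat.factorial (γ i))
        = ∏ i ∈ Finset.univ.erase j,
          Nat.choose (δ i + a i) (a i) * Nat.factorial (a i) := by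
      refine Finset.prod_congr rfl fun i hi => ?_
      have hne : i ≠ j := Finset.ne_of_mem_erase hi
      have e1 : γ i = a i := by
        rw [hγ, Finsupp.add_apply, Finsupp.single_apply, if_neg (Ne.symm hne), Nat.add_zero]
      have e2 : δ i = β i := by
        rw [hδ, Finsupp.add_apply, Finsupp.single_apply, if_neg (Ne.symm hne), Nat.add_zero]
      rw [e1, e2]
    rw [hj1, hj2, herase, nat_key (a j) (β j), mul_assoc]
  rw [key]
  have harg : β + γ = δ + a := by
    rw [hγ, hδ, add_comm a, ← add_assoc]
  rw [harg, Nat.cast_mul]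
  push_cast
  ring

theorem D_X (t i : σ) :
    D t (MvPowerSeries.X i : MvPowerSeries σ K) = if t = i then 1 else 0 := by
  rcases eq_or_ne t i with rfl | hne
  · rw [if_pos rfl, D_X_same]
  · rw [if_neg hne, D_X_ne hne]

end Aux

namespace Aux2

open MvPowerSeries Aux

variable {K : Type} [Field K] {n : ℕ}

theorem chart_zero (a : Fin n → K) : chartS a 0 = (X 0 : MvPowerSeries (Fin (n + 1)) K) := by
  simp [chartS]

theorem chart_succ (a : Fin n → K) (u : Fin n) :
    chartS a (Fin.succ u) = (X 0 : MvPowerSeries (Fin (n + 1)) K) *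
      (C (a u) + X u.succ) := by
  simp [chartS]

theorem chart_pos (a : Fin n → K) : ∀ i, OrdGe 1 (chartS a i) := by
  intro i
  refine Fin.cases ?_ ?_ i
  · rw [chart_zero]
    exact ordGe_X 0
  · intro u
    rw [chart_succ]
    have := ordGe_mul (ordGe_X (σ := Fin (n + 1)) (K := K) 0)
      (ordGe_zero (C (a u) + X u.succ))
    simpa using this

theorem D_chart_succ_zero (a : Fin n → K) (u : Fin n) :
    D (Fin.succ u) (chartS a 0) = 0 := by
  rw [chart_zero]
  exact D_X_ne (Fin.succ_ne_zero u)

theorem D_chart_succ_succ (a : Fin n → K) (u w : Fin n) :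
    D (Fin.succ u) (chartS a (Fin.succ w)) = if w = u then X 0 else 0 := by
  rw [chart_succ, D_mul, D_X_ne (Fin.succ_ne_zero u), D_add, D_C, D_X]
  rcases eq_or_ne w u with rfl | hne
  · simp
  · have h2 : Fin.succ u ≠ Fin.succ w := fun h => hne (Fin.succ_injective _ h).symm
    simp [h2, hne]

theorem D_chart_zero_zero (a : Fin n → K) : D 0 (chartS a 0) = 1 := by
  rw [chart_zero]
  exact D_X_same 0

theorem D_chart_zero_succ (a : Fin n → K) (w : Fin n) :
    D 0 (chartS a (Fin.succ w)) = C (a w) + X w.succ := by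
  rw [chart_succ, D_mul, D_X_same, D_add, D_C, D_X_ne (Fin.succ_ne_zero w).symm]
  ring

theorem chain_succ (a : Fin n → K) (u : Fin n) (g : MvPowerSeries (Fin (n + 1)) K) :
    D (Fin.succ u) (mySubst (chartS a) g)
      = mySubst (chartS a) (D (Fin.succ u) g) * X 0 := by
  rw [chainRule (chartS a) (chart_pos a), Fin.sum_univ_succ, D_chart_succ_zero, mul_zero,
    zero_add]
  have : ∀ w : Fin n, mySubst (chartS a) (D (Fin.succ w) g) * D (Fin.succ u) (chartS a (Fin.succ w))
      = if w = u then mySubst (chartS a) (D (Fin.succ w) g) * X 0 else 0 := by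
    intro w
    rw [D_chart_succ_succ]
    rcases eq_or_ne w u with rfl | hne
    · rw [if_pos rfl, if_pos rfl]
    · rw [if_neg hne, if_neg hne, mul_zero]
  rw [Finset.sum_congr rfl fun w _ => this w, Finset.sum_ite_eq' Finset.univ u]
  rw [if_pos (Finset.mem_univ u)]

theorem chain_zero (a : Fin n → K) (g : MvPowerSeries (Fin (n + 1)) K) :
    D 0 (mySubst (chartS a) g)
      = mySubst (chartS a) (D 0 g)
        + ∑ u : Fin n, mySubst (chartS a) (D (Fin.succ u) g)
            * (C (a u) + X u.succ) := by
  rw [chainRule (chartS a) (chart_pos a), Fin.sum_univ_succ, D_chart_zero_zero, mul_one]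
  congr 1
  exact Finset.sum_congr rfl fun w _ => by rw [D_chart_zero_succ]

noncomputable def J (f' : MvPowerSeries (Fin (n + 1)) K) (d : ℕ) :
    Ideal (MvPowerSeries (Fin (n + 1)) K) :=
  Ideal.span {g | ∃ β, deg β ≤ d ∧ g = pdMulti β f'}

theorem J_mono (f' : MvPowerSeries (Fin (n + 1)) K) {d d' : ℕ} (h : d ≤ d') :
    J f' d ≤ J f' d' :=
  Ideal.span_mono fun g ⟨β, hβ, he⟩ => ⟨β, hβ.trans h, he⟩

theorem pdMulti_mem_J (f' : MvPowerSeries (Fin (n + 1)) K) {d : ℕ} {β : Fin (n + 1) →₀ ℕ}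
    (h : deg β ≤ d) : pdMulti β f' ∈ J f' d :=
  Ideal.subset_span ⟨β, h, rfl⟩

theorem D_zero' (j : Fin (n + 1)) : D j (0 : MvPowerSeries (Fin (n + 1)) K) = 0 :=
  (Dl j).map_zero

theorem D_mem_J (f' : MvPowerSeries (Fin (n + 1)) K) (j : Fin (n + 1)) {d : ℕ}
    {g : MvPowerSeries (Fin (n + 1)) K} (hg : g ∈ J f' d) : D j g ∈ J f' (d + 1) := by
  refine Submodule.span_induction ?_ ?_ ?_ ?_ hg
  · rintro x ⟨β, hβ, rfl⟩
    rw [← pdMulti_add_single]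
    refine pdMulti_mem_J f' ?_
    rw [deg_add, deg_single]
    omega
  · rw [D_zero']
    exact Ideal.zero_mem _
  · intro x y _ _ hx hy
    rw [D_add]
    exact Ideal.add_mem _ hx hy
  · intro r x hxmem hx
    rw [smul_eq_mul, D_mul]
    refine Ideal.add_mem _ ?_ ?_
    · exact Ideal.mul_mem_left _ _ (J_mono f' (Nat.le_succ d) hxmem)
    · exact Ideal.mul_mem_left _ _ hx

theorem X0_ne_zero : (X 0 : MvPowerSeries (Fin (n + 1)) K) ≠ 0 := by
  intro h
  have := congrArg (MvPowerSeries.coeff (Finsupp.single 0 1)) h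
  rw [MvPowerSeries.coeff_X, if_pos rfl, map_zero] at this
  exact one_ne_zero this

theorem main_ind (f f' : MvPowerSeries (Fin (n + 1)) K) (a : Fin n → K) (m : ℕ)
    (hst : mySubst (chartS a) f = MvPowerSeries.X 0 ^ m * f') :
    ∀ d, d ≤ m → ∀ α : Fin (n + 1) →₀ ℕ, deg α = d →
      ∃ h ∈ J f' d, mySubst (chartS a) (pdMulti α f) = X 0 ^ (m - d) * h := by
  intro d
  induction d with
  | zero =>
    intro _ α hα
    have : α = 0 := eq_zero_of_deg_eq_zero hα
    subst this
    refine ⟨f', ?_, by rw [pdMulti_zero, hst, Nat.sub_zero]⟩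
    have hmem := pdMulti_mem_J f' (d := 0) (β := 0) (by rw [deg_zero])
    rwa [pdMulti_zero] at hmem
  | succ d ih =>
    intro hdm α hα
    have hj : ∃ j, α j ≠ 0 := by
      by_contra hc
      push_neg at hc
      have : α = 0 := Finsupp.ext hc
      rw [this, deg_zero] at hα
      omega
    obtain ⟨j, hj⟩ := hj
    have hle : Finsupp.single j 1 ≤ α := Finsupp.single_le_iff.mpr (Nat.one_le_iff_ne_zero.mpr hj)
    set α' := α - Finsupp.single j 1 with hα'def
    have hα'add : α' + Finsupp.single j 1 = α := tsub_add_cancel_of_le hle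
    have hdeg' : deg α' = d := by
      have h1 := deg_add α' (Finsupp.single j 1)
      rw [hα'add, deg_single, hα] at h1
      omega
    obtain ⟨h, hhJ, hhe⟩ := ih (by omega) α' hdeg'
    have hmd : m - d = (m - (d + 1)) + 1 := by omega
    set g := pdMulti α' f with hg
    have hpd : pdMulti α f = D j g := by
      rw [← hα'add, pdMulti_add_single]
    have succ_case : ∀ u : Fin n, mySubst (chartS a) (D (Fin.succ u) g)
        = X 0 ^ (m - (d + 1)) * D (Fin.succ u) h := by
      intro u
      have h1 := chain_succ a u g
      rw [hhe] at h1
      have h2 : D (Fin.succ u) (X 0 ^ (m - d) * h)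
          = X 0 ^ (m - d) * D (Fin.succ u) h := by
        rw [D_mul, D_pow, D_X_ne (Fin.succ_ne_zero u)]
        simp
      rw [h2] at h1
      have h3 : X 0 ^ (m - d) * D (Fin.succ u) h
          = (X 0 ^ (m - (d + 1)) * D (Fin.succ u) h) * X 0 := by
        rw [hmd, pow_succ]
        ring
      rw [h3] at h1
      exact mul_right_cancel₀ X0_ne_zero h1.symm
    rcases Fin.eq_zero_or_eq_succ j with h0 | ⟨u, hu⟩
    · -- j = 0
      subst h0
      refine ⟨((m - d : ℕ) : MvPowerSeries (Fin (n + 1)) K) * h + X 0 * D 0 h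
        - ∑ u : Fin n, D (Fin.succ u) h * (C (a u) + X u.succ), ?_, ?_⟩
      · refine Ideal.sub_mem _ (Ideal.add_mem _ ?_ ?_) ?_
        · exact Ideal.mul_mem_left _ _ (J_mono f' (Nat.le_succ d) hhJ)
        · exact Ideal.mul_mem_left _ _ (D_mem_J f' 0 hhJ)
        · exact Ideal.sum_mem _ fun u _ => Ideal.mul_mem_right _ _ (D_mem_J f' _ hhJ)
      · have h1 := chain_zero a g
        rw [hhe] at h1
        have h2 : D 0 (X 0 ^ (m - d) * h)
            = ((m - d : ℕ) : MvPowerSeries (Fin (n + 1)) K) * (X 0 ^ (m - (d + 1)) * h)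
              + X 0 ^ (m - d) * D 0 h := by
          rw [D_mul, D_pow, D_X_same, mul_one, nsmul_eq_mul]
          have he2 : (m - d) - 1 = m - (d + 1) := by omega
          rw [he2]
          ring
        rw [h2] at h1
        have h3 : ∀ u : Fin n, mySubst (chartS a) (D (Fin.succ u) g)
              * (C (a u) + X u.succ)
            = X 0 ^ (m - (d + 1))
              * (D (Fin.succ u) h * (C (a u) + X u.succ)) := by
          intro u
          rw [succ_case u]
          ring
        rw [Finset.sum_congr rfl fun u _ => h3 u, ← Finset.mul_sum] at h1
        have h4 : (X 0 : MvPowerSeries (Fin (n + 1)) K) ^ (m - d)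
            = X 0 ^ (m - (d + 1)) * X 0 := by
          rw [hmd, pow_succ]
        rw [h4] at h1
        rw [hpd]
        linear_combination -h1
    · -- j = u.succ
      refine ⟨D (Fin.succ u) h, D_mem_J f' _ hhJ, ?_⟩
      rw [hpd, hu, succ_case u]

end Aux2

theorem derivative_strict_transform_mem {K : Type} [Field K] [CharZero K] {n : ℕ}
    (f f' : MvPowerSeries (Fin (n + 1)) K) (hf : f ≠ 0) (m : ℕ)
    (hm₁ : ∃ α, deg α = m ∧ MvPowerSeries.coeff α f ≠ 0)
    (hm₂ : ∀ α, MvPowerSeries.coeff α f ≠ 0 → m ≤ deg α)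
    (a : Fin n → K)
    (hst : mySubst (chartS a) f = MvPowerSeries.X 0 ^ m * f')
    (k : ℕ) (hk : k ≤ m) (α : Fin (n + 1) →₀ ℕ) (hα : deg α ≤ k) :
    mySubst (chartS a) (pdMulti α f) ∈
      Ideal.span {(MvPowerSeries.X 0 : MvPowerSeries (Fin (n + 1)) K) ^ (m - k)} *
      Ideal.span {g : MvPowerSeries (Fin (n + 1)) K |
        ∃ β, deg β ≤ k ∧ g = pdMulti β f'} := by
  obtain ⟨h, hJ, he⟩ := Aux2.main_ind f f' a m hst (deg α) (le_trans hα hk) α rfl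
  rw [he]
  have hsplit : (MvPowerSeries.X 0 : MvPowerSeries (Fin (n + 1)) K) ^ (m - deg α)
      = MvPowerSeries.X 0 ^ (m - k) * MvPowerSeries.X 0 ^ (k - deg α) := by
    rw [← pow_add]
    congr 1
    omega
  rw [hsplit, mul_assoc]
  refine Ideal.mul_mem_mul (Ideal.subset_span (Set.mem_singleton _)) ?_
  exact Ideal.mul_mem_left _ _ (Aux2.J_mono f' hα hJ)
end

section
/- Let V ⊆ K^l be an irreducible affine variety with coordinate ring K[V], and let F_1,…,F_s ∈ K[V][[t,X_1,…,X_n]] generate an ideal R with diagram of initial exponents N(R) ⊂ ℕ^{n+1}. For v ∈ V, let R_v ⊆ K[[t,X]] be the ideal generated by the evaluations F_j(v,t,X). Then: (1) for every v ∈ V, N(R) ≤ N(R_v) in the total order on diagrams; (2) there is a proper subvariety V' ⊊ V such that N(R_v) = N(R) for all v ∈ V \ V', and for each vertex β of N(R) there exists G ∈ R with ν(G) = β and ν(G(v,t,X)) = β for all v ∈ V \ V'. -/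
/- STATEMENT 10: (Bierstone–Milman genericity lemma.)  For an ideal `R` of
   `K[V][[t,X]]` generated by `F_1,…,F_s`, with `K[V]` the coordinate ring of
   an irreducible affine variety (a finitely generated domain over an
   algebraically closed field, whose points are the `K`-algebra morphisms
   `K[V] →ₐ[K] K`): (1) `N(R) ≤ N(R_v)` for every point `v`; (2) on the
   complement of a proper subvariety `{f₀ = 0}`, `N(R_v) = N(R)` and every
   vertex `β` of `N(R)` is realized by some `G ∈ R` with `ν(G(v)) = ν(G) = β`. -/

open scoped Classical

/-- The key `(|α|, α_0, α_1, …, α_n)` (first entry of the exponent is the `t`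
variable); keys are compared lexicographically. -/
noncomputable def fKey {n : ℕ} (α : Fin (n + 1) →₀ ℕ) : List ℕ :=
  (deg α) :: List.ofFn fun i => α i

/-- Initial exponent predicate: `β = ν(g)`. -/
def IsInitExp {B : Type} [CommRing B] {n : ℕ} (g : MvPowerSeries (Fin (n + 1)) B)
    (β : Fin (n + 1) →₀ ℕ) : Prop :=
  MvPowerSeries.coeff β g ≠ 0 ∧
    ∀ γ, MvPowerSeries.coeff γ g ≠ 0 → fKey β ≤ fKey γ

/-- Diagram of initial exponents of an ideal. -/
def diagOf {B : Type} [CommRing B] {n : ℕ} (J : Ideal (MvPowerSeries (Fin (n + 1)) B)) :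
    Set (Fin (n + 1) →₀ ℕ) :=
  {β | ∃ g ∈ J, g ≠ 0 ∧ IsInitExp g β}

/-- `β` is a vertex of the diagram `N`. -/
def IsVertex {n : ℕ} (N : Set (Fin (n + 1) →₀ ℕ)) (β : Fin (n + 1) →₀ ℕ) : Prop :=
  β ∈ N ∧ ∀ γ ∈ N, (∃ b, β = γ + b) → γ = β

def VertexList {n : ℕ} (N : Set (Fin (n + 1) →₀ ℕ)) (l : List (Fin (n + 1) →₀ ℕ)) : Prop :=
  l.Pairwise (fun a b => fKey a < fKey b) ∧
  N = (⋃ s ∈ l.toFinset, {x | ∃ b, x = s + b}) ∧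
  ∀ s ∈ l.toFinset, s ∉ ⋃ t ∈ l.toFinset.erase s, {x | ∃ b, x = t + b}

noncomputable def padKey {n : ℕ} (l : List (Fin (n + 1) →₀ ℕ)) (j : ℕ) : WithTop (List ℕ) :=
  (l[j]?).elim ⊤ fun a => (fKey a : WithTop (List ℕ))

def listDiagLT {n : ℕ} (l₁ l₂ : List (Fin (n + 1) →₀ ℕ)) : Prop :=
  ∃ j : ℕ, (∀ j' < j, padKey l₁ j' = padKey l₂ j') ∧ padKey l₁ j < padKey l₂ j

/-- The total order on diagrams, via the `∞`-padded vertex sequences. -/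
def DiagLE {n : ℕ} (N₁ N₂ : Set (Fin (n + 1) →₀ ℕ)) : Prop :=
  ∃ l₁ l₂, VertexList N₁ l₁ ∧ VertexList N₂ l₂ ∧ (listDiagLT l₁ l₂ ∨ l₁ = l₂)

namespace BMaux
variable {n : ℕ}

theorem fKey_injective : Function.Injective (fKey (n := n)) := by
  intro a b h
  simp only [fKey, List.cons.injEq] at h
  have := List.ofFn_injective h.2
  ext i
  exact congrFun this i

theorem lt_of_lex (l l' : List ℕ) (h : List.Lex (· < ·) l l') : l < l' := h

theorem lex_of_lt (l l' : List ℕ) (h : l < l') : List.Lex (· < ·) l l' := h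

theorem fKey_lt_of_deg_lt {a b : Fin (n+1) →₀ ℕ} (h : deg a < deg b) : fKey a < fKey b :=
  lt_of_lex _ _ (List.Lex.rel h)

theorem deg_le_of_fKey_le {a b : Fin (n+1) →₀ ℕ} (h : fKey a ≤ fKey b) : deg a ≤ deg b := by
  by_contra hc
  exact absurd (fKey_lt_of_deg_lt (Nat.lt_of_not_le hc)) (not_lt_of_ge h)

theorem deg_mono {a b : Fin (n+1) →₀ ℕ} (h : a ≤ b) : deg a ≤ deg b := by
  refine Finset.sum_le_sum fun i _ => ?_
  exact Finsupp.le_def.mp h i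

theorem deg_strict_mono {a b : Fin (n+1) →₀ ℕ} (h : a ≤ b) (hne : a ≠ b) : deg a < deg b := by
  have h' := Finsupp.le_def.mp h
  obtain ⟨i, hi⟩ : ∃ i, a i ≠ b i := by
    by_contra hc
    push_neg at hc
    exact hne (Finsupp.ext hc)
  exact Finset.sum_lt_sum (fun i _ => h' i) ⟨i, Finset.mem_univ i, lt_of_le_of_ne (h' i) hi⟩

theorem fKey_lt_of_lt {a b : Fin (n+1) →₀ ℕ} (h : a ≤ b) (hne : a ≠ b) : fKey a < fKey b :=
  fKey_lt_of_deg_lt (deg_strict_mono h hne)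

theorem fKey_le_of_le {a b : Fin (n+1) →₀ ℕ} (h : a ≤ b) : fKey a ≤ fKey b := by
  rcases eq_or_ne a b with rfl | hne
  · exact le_rfl
  · exact le_of_lt (fKey_lt_of_lt h hne)

theorem deg_add (a b : Fin (n+1) →₀ ℕ) : deg (a + b) = deg a + deg b := by
  simp [deg, Finsupp.add_apply, Finset.sum_add_distrib]

theorem ofFn_add {m : ℕ} (f g : Fin m → ℕ) :
    (List.ofFn fun i => f i + g i) = List.zipWith (· + ·) (List.ofFn f) (List.ofFn g) := by
  apply List.ext_getElem <;> simp

theorem fKey_add (a b : Fin (n+1) →₀ ℕ) :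
    fKey (a + b) = List.zipWith (· + ·) (fKey a) (fKey b) := by
  simp only [fKey, List.zipWith]
  rw [deg_add]
  congr 1
  rw [← ofFn_add]
  simp [Finsupp.add_apply]

theorem lex_zip_add (l₁ l₂ : List ℕ) (h : List.Lex (· < ·) l₁ l₂) :
    ∀ l₃ : List ℕ, l₃.length = l₂.length →
    List.Lex (· < ·) (List.zipWith (· + ·) l₁ l₃) (List.zipWith (· + ·) l₂ l₃) := by
  induction h with
  | nil => intro l₃ hlen; cases l₃ with
    | nil => simp at hlen
    | cons c t => exact List.Lex.nil
  | @rel a l₁ b l₂ hab => intro l₃ hlen; cases l₃ with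
    | nil => simp at hlen
    | cons c t => exact List.Lex.rel (show a + c < b + c by omega)
  | @cons a l₁ l₂ h ih => intro l₃ hlen; cases l₃ with
    | nil => simp at hlen
    | cons c t => exact List.Lex.cons (ih t (by simpa using hlen))

theorem fKey_add_lt_add {a b : Fin (n+1) →₀ ℕ} (c : Fin (n+1) →₀ ℕ)
    (h : fKey a < fKey b) : fKey (a + c) < fKey (b + c) := by
  rw [fKey_add, fKey_add]
  exact lt_of_lex _ _ (lex_zip_add _ _ (lex_of_lt _ _ h) _ (by simp [fKey]))

theorem fKey_add_le_add {a b : Fin (n+1) →₀ ℕ} (c : Fin (n+1) →₀ ℕ)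
    (h : fKey a ≤ fKey b) : fKey (a + c) ≤ fKey (b + c) := by
  rcases eq_or_lt_of_le h with heq | hlt
  · rw [fKey_injective heq]
  · exact le_of_lt (fKey_add_lt_add c hlt)

/-- The "key-interval" `{γ | fKey γ ≤ fKey δ}` is finite. -/
theorem finite_fKey_le (δ : Fin (n+1) →₀ ℕ) : {γ : Fin (n+1) →₀ ℕ | fKey γ ≤ fKey δ}.Finite := by
  have : {γ : Fin (n+1) →₀ ℕ | fKey γ ≤ fKey δ} ⊆
      ((Finset.Iic (Finsupp.equivFunOnFinite.symm fun _ => deg δ) :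
        Finset (Fin (n+1) →₀ ℕ)) : Set (Fin (n+1) →₀ ℕ)) := by
    intro γ hγ
    simp only [Set.mem_setOf_eq] at hγ
    simp only [Finset.coe_Iic, Set.mem_Iic]
    rw [Finsupp.le_def]
    intro i
    have h1 : γ i ≤ deg γ := by
      simpa [deg] using Finset.single_le_sum (f := fun j => γ j) (fun j _ => Nat.zero_le _)
        (Finset.mem_univ i)
    calc γ i ≤ deg γ := h1
      _ ≤ deg δ := deg_le_of_fKey_le hγ
      _ = Finsupp.equivFunOnFinite.symm (fun _ => deg δ) i := rfl
  exact Set.Finite.subset (Finset.finite_toSet _) this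

/-- Any nonempty set of exponents has a key-minimal element. -/
theorem exists_key_min {S : Set (Fin (n+1) →₀ ℕ)} (hS : S.Nonempty) :
    ∃ m ∈ S, ∀ x ∈ S, fKey m ≤ fKey x := by
  obtain ⟨γ₀, hγ₀⟩ := hS
  have hfin : {γ ∈ S | fKey γ ≤ fKey γ₀}.Finite :=
    (finite_fKey_le γ₀).subset fun x hx => hx.2
  obtain ⟨m, hm, hmin⟩ := Finset.exists_min_image hfin.toFinset fKey
    ⟨γ₀, by simp [Set.Finite.mem_toFinset, hγ₀]⟩
  rw [Set.Finite.mem_toFinset] at hm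
  refine ⟨m, hm.1, fun x hx => ?_⟩
  by_cases hle : fKey x ≤ fKey γ₀
  · exact hmin x (by rw [Set.Finite.mem_toFinset]; exact ⟨hx, hle⟩)
  · exact le_trans hm.2 (le_of_not_ge hle)

end BMaux

namespace BMaux
variable {n : ℕ} {B : Type} [CommRing B]

/-- Existence of the initial exponent. -/
theorem exists_isInitExp {g : MvPowerSeries (Fin (n+1)) B} (hg : g ≠ 0) :
    ∃ β, IsInitExp g β := by
  have hne : {γ : Fin (n+1) →₀ ℕ | MvPowerSeries.coeff γ g ≠ 0}.Nonempty := by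
    by_contra hc
    rw [Set.not_nonempty_iff_eq_empty] at hc
    apply hg
    ext γ
    have : γ ∉ ({γ : Fin (n+1) →₀ ℕ | MvPowerSeries.coeff γ g ≠ 0}) := by rw [hc]; exact id
    simpa using this
  obtain ⟨m, hm, hmin⟩ := exists_key_min hne
  exact ⟨m, hm, fun γ hγ => hmin γ hγ⟩

theorem mem_diagOf {J : Ideal (MvPowerSeries (Fin (n+1)) B)} {g : MvPowerSeries (Fin (n+1)) B}
    (hgJ : g ∈ J) (hg : g ≠ 0) {β} (h : IsInitExp g β) : β ∈ diagOf J := ⟨g, hgJ, hg, h⟩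

/-- Stability of the diagram under translation. -/
theorem diagOf_add_mem {J : Ideal (MvPowerSeries (Fin (n+1)) B)} {β : Fin (n+1) →₀ ℕ}
    (hβ : β ∈ diagOf J) (b : Fin (n+1) →₀ ℕ) : β + b ∈ diagOf J := by
  obtain ⟨g, hgJ, hg0, hcoeff, hmin⟩ := hβ
  set g' := MvPowerSeries.monomial b 1 * g with hg'
  have hco : ∀ γ, MvPowerSeries.coeff γ g' =
      if b ≤ γ then MvPowerSeries.coeff (γ - b) g else 0 := by
    intro γ
    rw [hg', MvPowerSeries.coeff_monomial_mul]
    simp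
  have hcb : MvPowerSeries.coeff (β + b) g' = MvPowerSeries.coeff β g := by
    rw [hco]
    simp [le_add_self]
  refine ⟨g', J.mul_mem_left _ hgJ, ?_, ?_, ?_⟩
  · intro h0
    rw [h0] at hcb
    simp at hcb
    exact hcoeff hcb.symm
  · rw [hcb]; exact hcoeff
  · intro γ hγ
    rw [hco] at hγ
    by_cases hbγ : b ≤ γ
    · rw [if_pos hbγ] at hγ
      have : fKey (β + b) ≤ fKey ((γ - b) + b) := fKey_add_le_add b (hmin _ hγ)
      rwa [tsub_add_cancel_of_le hbγ] at this
    · rw [if_neg hbγ] at hγ; exact absurd rfl hγ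

end BMaux

namespace BMaux
variable {n : ℕ}

/-- Minimal elements of a diagram. -/
def Vmin (N : Set (Fin (n+1) →₀ ℕ)) : Set (Fin (n+1) →₀ ℕ) :=
  {β | β ∈ N ∧ ∀ γ ∈ N, γ ≤ β → γ = β}

theorem vmin_finite (N : Set (Fin (n+1) →₀ ℕ)) : (Vmin N).Finite := by
  refine IsAntichain.finite_of_partiallyWellOrderedOn (r := (· ≤ ·)) ?_ (Set.isPWO_of_wellQuasiOrderedLE _)
  intro a ha b hb hab hle
  exact hab (hb.2 a ha.1 hle)

theorem exists_vmin_le {N : Set (Fin (n+1) →₀ ℕ)} :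
    ∀ β ∈ N, ∃ m ∈ Vmin N, m ≤ β := by
  intro β hβ
  generalize hd : deg β = d
  induction d using Nat.strong_induction_on generalizing β with
  | _ d ih =>
    by_cases hm : ∀ γ ∈ N, γ ≤ β → γ = β
    · exact ⟨β, ⟨hβ, hm⟩, le_rfl⟩
    · push_neg at hm
      obtain ⟨γ, hγN, hγle, hγne⟩ := hm
      obtain ⟨m, hmV, hmle⟩ := ih (deg γ) (hd ▸ deg_strict_mono hγle hγne) γ hγN rfl
      exact ⟨m, hmV, le_trans hmle hγle⟩

instance : IsTrans (Fin (n+1) →₀ ℕ) (fun a b => fKey a ≤ fKey b) :=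
  ⟨fun _ _ _ h1 h2 => le_trans h1 h2⟩
instance : IsAntisymm (Fin (n+1) →₀ ℕ) (fun a b => fKey a ≤ fKey b) :=
  ⟨fun _ _ h1 h2 => fKey_injective (le_antisymm h1 h2)⟩
instance : IsTotal (Fin (n+1) →₀ ℕ) (fun a b => fKey a ≤ fKey b) :=
  ⟨fun a b => le_total _ _⟩

/-- Canonical vertex list of a diagram. -/
noncomputable def vList (N : Set (Fin (n+1) →₀ ℕ)) : List (Fin (n+1) →₀ ℕ) :=
  (vmin_finite N).toFinset.sort (fun a b => fKey a ≤ fKey b)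

theorem mem_vList {N : Set (Fin (n+1) →₀ ℕ)} {x} : x ∈ vList N ↔ x ∈ Vmin N := by
  rw [vList, Finset.mem_sort, Set.Finite.mem_toFinset]

theorem vList_sorted (N : Set (Fin (n+1) →₀ ℕ)) :
    (vList N).Pairwise (fun a b => fKey a < fKey b) := by
  have h1 := Finset.pairwise_sort (vmin_finite N).toFinset (fun a b => fKey a ≤ fKey b)
  have h2 := Finset.sort_nodup (vmin_finite N).toFinset (fun a b => fKey a ≤ fKey b)
  rw [List.Nodup] at h2
  exact (h1.and h2).imp fun ⟨hle, hne⟩ =>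
    lt_of_le_of_ne hle (fun h => hne (fKey_injective h))

theorem isVertex_iff {N : Set (Fin (n+1) →₀ ℕ)} {β} : IsVertex N β ↔ β ∈ Vmin N := by
  constructor
  · rintro ⟨hβ, h⟩
    exact ⟨hβ, fun γ hγ hle => h γ hγ (le_iff_exists_add.mp hle)⟩
  · rintro ⟨hβ, h⟩
    exact ⟨hβ, fun γ hγ hex => h γ hγ (le_iff_exists_add.mpr hex)⟩

theorem vertexList_vList {N : Set (Fin (n+1) →₀ ℕ)}
    (hstab : ∀ β ∈ N, ∀ b, β + b ∈ N) : VertexList N (vList N) := by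
  refine ⟨vList_sorted N, ?_, ?_⟩
  · ext x
    simp only [Set.mem_iUnion, List.mem_toFinset, Set.mem_setOf_eq, exists_prop]
    constructor
    · intro hx
      obtain ⟨m, hmV, hmle⟩ := exists_vmin_le x hx
      exact ⟨m, mem_vList.mpr hmV, le_iff_exists_add.mp hmle⟩
    · rintro ⟨s, hs, b, rfl⟩
      exact hstab s (mem_vList.mp hs).1 b
  · intro s hs
    rw [List.mem_toFinset, mem_vList] at hs
    simp only [Set.mem_iUnion, Finset.mem_erase, List.mem_toFinset, Set.mem_setOf_eq, not_exists]
    rintro t ⟨htne, ht⟩ b hb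
    rw [mem_vList] at ht
    exact htne (hs.2 t ht.1 (le_iff_exists_add.mpr ⟨b, hb⟩))

end BMaux

namespace BMaux
variable {n : ℕ}

theorem padKey_cons_zero (a : Fin (n+1) →₀ ℕ) (t : List (Fin (n+1) →₀ ℕ)) :
    padKey (a :: t) 0 = (fKey a : WithTop (List ℕ)) := by simp [padKey]

theorem padKey_cons_succ (a : Fin (n+1) →₀ ℕ) (t : List (Fin (n+1) →₀ ℕ)) (j : ℕ) :
    padKey (a :: t) (j+1) = padKey t j := by simp [padKey]

theorem listDiagLT_aux : ∀ (l₁ l₂ : List (Fin (n+1) →₀ ℕ)),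
    l₁.Pairwise (fun a b => fKey a < fKey b) → l₂.Pairwise (fun a b => fKey a < fKey b) →
    ∀ δ, δ ∈ l₁ → (∀ y, fKey y < fKey δ → (y ∈ l₁ ↔ y ∈ l₂)) →
    (∀ y ∈ l₂, fKey y ≠ fKey δ) → listDiagLT l₁ l₂
  | [], l₂, _, _, δ, hδ, _, _ => absurd hδ (List.not_mem_nil)
  | a :: t₁, [], _, _, δ, hδ, _, _ => by
    refine ⟨0, fun j' hj' => absurd hj' (Nat.not_lt_zero j'), ?_⟩
    rw [padKey_cons_zero]
    show _ < (⊤ : WithTop (List ℕ))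
    exact WithTop.coe_lt_top _
  | a :: t₁, b :: t₂, hs₁, hs₂, δ, hδ, H, H2 => by
    have hat₁ : a ∉ t₁ := fun h => absurd (List.rel_of_pairwise_cons hs₁ h) (lt_irrefl _)
    have hbt₂ : b ∉ t₂ := fun h => absurd (List.rel_of_pairwise_cons hs₂ h) (lt_irrefl _)
    by_cases had : fKey a < fKey δ
    · -- heads are equal, recurse
      have haδ : a ≠ δ := fun h => absurd (h ▸ had) (lt_irrefl _)
      have hδt₁ : δ ∈ t₁ := (List.mem_cons.mp hδ).resolve_left fun h => haδ h.symm
      have hal₂ : a ∈ b :: t₂ := (H a had).mp (List.mem_cons_self)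
      have hba : fKey b ≤ fKey a := by
        rcases List.mem_cons.mp hal₂ with h | h
        · rw [h]
        · exact le_of_lt (List.rel_of_pairwise_cons hs₂ h)
      have hbd : fKey b < fKey δ := lt_of_le_of_lt hba had
      have hbl₁ : b ∈ a :: t₁ := (H b hbd).mpr (List.mem_cons_self)
      have hab : fKey a ≤ fKey b := by
        rcases List.mem_cons.mp hbl₁ with h | h
        · rw [h]
        · exact le_of_lt (List.rel_of_pairwise_cons hs₁ h)
      have hba' : a = b := fKey_injective (le_antisymm hab hba)
      subst hba'
      have H' : ∀ y, fKey y < fKey δ → (y ∈ t₁ ↔ y ∈ t₂) := by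
        intro y hy
        rcases eq_or_ne y a with rfl | hne
        · exact iff_of_false hat₁ hbt₂
        · constructor
          · intro h
            exact (List.mem_cons.mp ((H y hy).mp (List.mem_cons_of_mem a h))).resolve_left hne
          · intro h
            exact (List.mem_cons.mp ((H y hy).mpr (List.mem_cons_of_mem a h))).resolve_left hne
      obtain ⟨j, hpre, hlt⟩ := listDiagLT_aux t₁ t₂ hs₁.of_cons hs₂.of_cons δ hδt₁ H'
        (fun y hy => H2 y (List.mem_cons_of_mem a hy))
      refine ⟨j+1, fun j' hj' => ?_, by rwa [padKey_cons_succ, padKey_cons_succ]⟩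
      cases j' with
      | zero => rw [padKey_cons_zero, padKey_cons_zero]
      | succ j'' => rw [padKey_cons_succ, padKey_cons_succ]; exact hpre j'' (by omega)
    · -- head of l₁ is δ, and everything in l₂ is bigger
      have haδ : a = δ := by
        rcases List.mem_cons.mp hδ with h | h
        · exact h.symm
        · exact absurd (List.rel_of_pairwise_cons hs₁ h) had
      subst haδ
      refine ⟨0, fun j' hj' => absurd hj' (Nat.not_lt_zero j'), ?_⟩
      rw [padKey_cons_zero, padKey_cons_zero]
      have : fKey a < fKey b := by
        rcases lt_trichotomy (fKey b) (fKey a) with h | h | h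
        · have : b ∈ a :: t₁ := (H b h).mpr (List.mem_cons_self)
          rcases List.mem_cons.mp this with h' | h'
          · exact absurd (h' ▸ h) (lt_irrefl _)
          · exact absurd (lt_trans h (List.rel_of_pairwise_cons hs₁ h')) (lt_irrefl _)
        · exact absurd h (H2 b (List.mem_cons_self))
        · exact h
      exact_mod_cast WithTop.coe_lt_coe.mpr this

end BMaux

namespace BMaux
variable {n : ℕ}

/-- Key-interval as a set. -/
def Kle (δ : Fin (n+1) →₀ ℕ) : Set (Fin (n+1) →₀ ℕ) := {γ | fKey γ ≤ fKey δ}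

theorem count_contra {N₁ N₂ : Set (Fin (n+1) →₀ ℕ)} {δ : Fin (n+1) →₀ ℕ}
    (hδ₂ : δ ∈ N₂) (hδ₁ : δ ∉ N₁) (hsub : N₁ ∩ Kle δ ⊆ N₂ ∩ Kle δ)
    (hC : (N₂ ∩ Kle δ).ncard ≤ (N₁ ∩ Kle δ).ncard) : False := by
  have hfin₁ : (N₁ ∩ Kle δ).Finite := Set.Finite.subset (finite_fKey_le δ) fun x hx => hx.2
  have hfin₂ : (N₂ ∩ Kle δ).Finite := Set.Finite.subset (finite_fKey_le δ) fun x hx => hx.2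
  have hins : insert δ (N₁ ∩ Kle δ) ⊆ N₂ ∩ Kle δ := by
    rw [Set.insert_subset_iff]
    exact ⟨⟨hδ₂, show fKey δ ≤ fKey δ from le_rfl⟩, hsub⟩
  have hnm : δ ∉ N₁ ∩ Kle δ := fun h => hδ₁ h.1
  have := Set.ncard_le_ncard hins hfin₂
  rw [Set.ncard_insert_of_notMem hnm hfin₁] at this
  omega

/-- The main combinatorial bridge: slice-counting inequalities imply `DiagLE`. -/
theorem diagLE_of_counts {N₁ N₂ : Set (Fin (n+1) →₀ ℕ)}
    (hstab₁ : ∀ β ∈ N₁, ∀ b, β + b ∈ N₁) (hstab₂ : ∀ β ∈ N₂, ∀ b, β + b ∈ N₂)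
    (hC : ∀ δ, (N₂ ∩ Kle δ).ncard ≤ (N₁ ∩ Kle δ).ncard) : DiagLE N₁ N₂ := by
  refine ⟨vList N₁, vList N₂, vertexList_vList hstab₁, vertexList_vList hstab₂, ?_⟩
  rcases eq_or_ne N₁ N₂ with rfl | hne
  · exact Or.inr rfl
  · left
    have hSne : ((N₁ \ N₂) ∪ (N₂ \ N₁)).Nonempty := by
      by_contra hc
      rw [Set.not_nonempty_iff_eq_empty] at hc
      apply hne
      ext x
      have hx := Set.eq_empty_iff_forall_notMem.mp hc x
      rcases Classical.em (x ∈ N₁) with h1 | h1 <;> rcases Classical.em (x ∈ N₂) with h2 | h2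
      · exact iff_of_true h1 h2
      · exact absurd (Or.inl ⟨h1, h2⟩) hx
      · exact absurd (Or.inr ⟨h2, h1⟩) hx
      · exact iff_of_false h1 h2
    obtain ⟨δ, hδS, hδmin⟩ := exists_key_min hSne
    have hagree : ∀ y, fKey y < fKey δ → (y ∈ N₁ ↔ y ∈ N₂) := by
      intro y hy
      by_contra hc
      have hyS : y ∈ (N₁ \ N₂) ∪ (N₂ \ N₁) := by
        rcases Classical.em (y ∈ N₁) with h1 | h1 <;> rcases Classical.em (y ∈ N₂) with h2 | h2
        · exact absurd (iff_of_true h1 h2) hc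
        · exact Or.inl ⟨h1, h2⟩
        · exact Or.inr ⟨h2, h1⟩
        · exact absurd (iff_of_false h1 h2) hc
      exact absurd (hδmin y hyS) (not_le_of_gt hy)
    have hδ1 : δ ∈ N₁ ∧ δ ∉ N₂ := by
      rcases hδS with h | h
      · exact ⟨h.1, h.2⟩
      · exfalso
        refine count_contra h.1 h.2 ?_ (hC δ)
        rintro x ⟨hx1, hxk⟩
        have hxne : x ≠ δ := fun hh => h.2 (hh ▸ hx1)
        have : fKey x < fKey δ := lt_of_le_of_ne hxk fun hh => hxne (fKey_injective hh)
        exact ⟨(hagree x this).mp hx1, hxk⟩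
    -- δ is a vertex of N₁
    have hδV : δ ∈ Vmin N₁ := by
      refine ⟨hδ1.1, fun γ hγ hle => ?_⟩
      by_contra hne'
      obtain ⟨b, hb⟩ := le_iff_exists_add.mp hle
      have : fKey γ < fKey δ := fKey_lt_of_lt hle hne'
      exact hδ1.2 (hb ▸ hstab₂ γ ((hagree γ this).mp hγ) b)
    -- vertices below δ agree
    have hVagree : ∀ y, fKey y < fKey δ → (y ∈ Vmin N₁ ↔ y ∈ Vmin N₂) := by
      intro y hy
      constructor
      · rintro ⟨hyN, hmin⟩
        refine ⟨(hagree y hy).mp hyN, fun γ hγ hle => ?_⟩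
        by_contra hne'
        have hγy : fKey γ < fKey y := fKey_lt_of_lt hle hne'
        exact hne' (hmin γ ((hagree γ (lt_trans hγy hy)).mpr hγ) hle)
      · rintro ⟨hyN, hmin⟩
        refine ⟨(hagree y hy).mpr hyN, fun γ hγ hle => ?_⟩
        by_contra hne'
        have hγy : fKey γ < fKey y := fKey_lt_of_lt hle hne'
        exact hne' (hmin γ ((hagree γ (lt_trans hγy hy)).mp hγ) hle)
    refine listDiagLT_aux _ _ (vList_sorted N₁) (vList_sorted N₂) δ
      (mem_vList.mpr hδV) (fun y hy => by rw [mem_vList, mem_vList]; exact hVagree y hy) ?_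
    intro y hyl hkey
    have : y = δ := fKey_injective hkey
    exact hδ1.2 (this ▸ (mem_vList.mp hyl).1)

/-- If moreover `N₁ ⊆ N₂`, counts force equality. -/
theorem eq_of_counts_of_subset {N₁ N₂ : Set (Fin (n+1) →₀ ℕ)} (hsub : N₁ ⊆ N₂)
    (hC : ∀ δ, (N₂ ∩ Kle δ).ncard ≤ (N₁ ∩ Kle δ).ncard) : N₂ = N₁ := by
  refine Set.Subset.antisymm (fun δ hδ => ?_) hsub
  by_contra hδ1
  exact count_contra hδ hδ1 (fun x hx => ⟨hsub hx.1, hx.2⟩) (hC δ)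

end BMaux

namespace BMaux
open MvPowerSeries
variable {n : ℕ}

/-- The finset of exponents with key at most that of `δ`. -/
noncomputable def Tfin (δ : Fin (n+1) →₀ ℕ) : Finset (Fin (n+1) →₀ ℕ) :=
  (finite_fKey_le δ).toFinset

theorem mem_Tfin {δ x : Fin (n+1) →₀ ℕ} : x ∈ Tfin δ ↔ fKey x ≤ fKey δ := by
  rw [Tfin, Set.Finite.mem_toFinset]; rfl

variable {B : Type} [CommRing B]

/-- Truncation to the coefficients indexed by `Tfin δ`. -/
noncomputable def trunc (δ : Fin (n+1) →₀ ℕ) :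
    MvPowerSeries (Fin (n+1)) B →ₗ[B] ({x // x ∈ Tfin δ} → B) :=
  LinearMap.pi fun t => MvPowerSeries.coeff (t : Fin (n+1) →₀ ℕ)

theorem trunc_apply (δ : Fin (n+1) →₀ ℕ) (g : MvPowerSeries (Fin (n+1)) B)
    (t : {x // x ∈ Tfin δ}) : trunc δ g t = MvPowerSeries.coeff (t : Fin (n+1) →₀ ℕ) g := rfl

/-- `β` is the leading (key-minimal) support element of the truncated vector `w`. -/
def Lead (δ : Fin (n+1) →₀ ℕ) (w : {x // x ∈ Tfin δ} → B) (β : Fin (n+1) →₀ ℕ) : Prop :=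
  ∃ hβ : β ∈ Tfin δ, w ⟨β, hβ⟩ ≠ 0 ∧
    ∀ t : {x // x ∈ Tfin δ}, w t ≠ 0 → fKey β ≤ fKey (t : Fin (n+1) →₀ ℕ)

/-- The rows spanning the truncation of the ideal generated by `F`. -/
noncomputable def rows (δ : Fin (n+1) →₀ ℕ) {s : ℕ} (F : Fin s → MvPowerSeries (Fin (n+1)) B) :
    ({x // x ∈ Tfin δ} × Fin s) → ({x // x ∈ Tfin δ} → B) :=
  fun p => trunc δ (MvPowerSeries.monomial (p.1 : Fin (n+1) →₀ ℕ) 1 * F p.2)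

theorem trunc_mem_span {δ : Fin (n+1) →₀ ℕ} {s : ℕ}
    {F : Fin s → MvPowerSeries (Fin (n+1)) B} {g : MvPowerSeries (Fin (n+1)) B}
    (hg : g ∈ Ideal.span (Set.range F)) :
    trunc δ g ∈ Submodule.span B (Set.range (rows δ F)) := by
  obtain ⟨c, hc⟩ := Ideal.mem_span_range_iff_exists_fun.mp hg
  -- the truncated multipliers
  set P : Fin s → MvPowerSeries (Fin (n+1)) B := fun j =>
    ∑ γ ∈ Tfin δ, MvPowerSeries.monomial γ (MvPowerSeries.coeff γ (c j)) with hP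
  have hcoeffP : ∀ j, ∀ a ∈ Tfin δ,
      MvPowerSeries.coeff a (P j) = MvPowerSeries.coeff a (c j) := by
    intro j a ha
    rw [hP, map_sum]
    rw [Finset.sum_eq_single a]
    · simp [MvPowerSeries.coeff_monomial]
    · intro b _ hb
      simp [MvPowerSeries.coeff_monomial, (Ne.symm hb)]
    · intro h; exact absurd ha h
  have hkey : ∀ j, ∀ t ∈ Tfin δ,
      MvPowerSeries.coeff t (c j * F j) = MvPowerSeries.coeff t (P j * F j) := by
    intro j t ht
    classical
    rw [MvPowerSeries.coeff_mul, MvPowerSeries.coeff_mul]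
    refine Finset.sum_congr rfl fun p hp => ?_
    replace hp : p.1 + p.2 = t := Finset.HasAntidiagonal.mem_antidiagonal.mp hp
    have hale : p.1 ≤ t := hp ▸ le_add_self.trans_eq (add_comm _ _)
    have haT : p.1 ∈ Tfin δ :=
      mem_Tfin.mpr (le_trans (fKey_le_of_le hale) (mem_Tfin.mp ht))
    rw [hcoeffP j p.1 haT]
  have htr : trunc δ g = trunc δ (∑ j, P j * F j) := by
    funext t
    rw [trunc_apply, trunc_apply, ← hc, map_sum, map_sum]
    exact Finset.sum_congr rfl fun j _ => hkey j t t.2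
  rw [htr]
  have hexpand : (∑ j, P j * F j) =
      ∑ j, ∑ γ ∈ Tfin δ, MvPowerSeries.coeff γ (c j) •
        (MvPowerSeries.monomial γ 1 * F j) := by
    refine Finset.sum_congr rfl fun j _ => ?_
    rw [hP, Finset.sum_mul]
    refine Finset.sum_congr rfl fun γ _ => ?_
    rw [← smul_mul_assoc]
    congr 1
    rw [← map_smul]
    simp
  rw [hexpand, map_sum]
  refine Submodule.sum_mem _ fun j _ => ?_
  rw [map_sum]
  refine Submodule.sum_mem _ fun γ hγ => ?_
  rw [map_smul]
  exact Submodule.smul_mem _ _ (Submodule.subset_span ⟨(⟨γ, hγ⟩, j), rfl⟩)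

theorem span_eq_trunc {δ : Fin (n+1) →₀ ℕ} {s : ℕ}
    {F : Fin s → MvPowerSeries (Fin (n+1)) B} {w : {x // x ∈ Tfin δ} → B}
    (hw : w ∈ Submodule.span B (Set.range (rows δ F))) :
    ∃ P ∈ Ideal.span (Set.range F), trunc δ P = w := by
  obtain ⟨u, hu⟩ := (Submodule.mem_span_range_iff_exists_fun B).mp hw
  refine ⟨∑ p : {x // x ∈ Tfin δ} × Fin s,
    u p • (MvPowerSeries.monomial (p.1 : Fin (n+1) →₀ ℕ) 1 * F p.2), ?_, ?_⟩
  · refine Submodule.sum_mem _ fun p _ => Submodule.smul_of_tower_mem _ _ ?_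
    exact Ideal.mul_mem_left _ _ (Ideal.subset_span ⟨p.2, rfl⟩)
  · rw [map_sum, ← hu]
    exact Finset.sum_congr rfl fun p _ => by rw [map_smul]; rfl

/-- Slice of the diagram described by leading exponents of the truncated row space. -/
theorem diag_slice_eq_lead {δ : Fin (n+1) →₀ ℕ} {s : ℕ}
    {F : Fin s → MvPowerSeries (Fin (n+1)) B} :
    diagOf (Ideal.span (Set.range F)) ∩ Kle δ =
      {β | ∃ w ∈ Submodule.span B (Set.range (rows δ F)), Lead δ w β} := by
  ext β
  constructor
  · rintro ⟨⟨g, hgJ, hg0, hgc, hgm⟩, hβδ⟩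
    refine ⟨trunc δ g, trunc_mem_span hgJ, mem_Tfin.mpr hβδ, hgc, fun t ht => hgm _ ht⟩
  · rintro ⟨w, hwspan, hβT, hwβ, hwm⟩
    obtain ⟨P, hPJ, hPtr⟩ := span_eq_trunc hwspan
    have hcoeffβ : MvPowerSeries.coeff β P ≠ 0 := by
      have := congrFun hPtr ⟨β, hβT⟩
      rw [trunc_apply] at this
      rw [this]; exact hwβ
    have hinit : IsInitExp P β := by
      refine ⟨hcoeffβ, fun γ hγ => ?_⟩
      by_cases hγT : γ ∈ Tfin δ
      · refine hwm ⟨γ, hγT⟩ ?_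
        have := congrFun hPtr ⟨γ, hγT⟩
        rw [trunc_apply] at this
        rw [← this]; exact hγ
      · have h1 : fKey β ≤ fKey δ := mem_Tfin.mp hβT
        have h2 : ¬ (fKey γ ≤ fKey δ) := fun h => hγT (mem_Tfin.mpr h)
        exact le_trans h1 (le_of_not_ge h2)
    exact ⟨⟨P, hPJ, fun h0 => hcoeffβ (by rw [h0]; simp), hinit⟩, mem_Tfin.mp hβT⟩

end BMaux

namespace BMaux
variable {n : ℕ}

/-- The set of leading exponents of a space of truncated vectors. -/
def LeadSet {B : Type} [CommRing B] (δ : Fin (n+1) →₀ ℕ)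
    (W : Submodule B ({x // x ∈ Tfin δ} → B)) : Set (Fin (n+1) →₀ ℕ) :=
  {β | ∃ w ∈ W, Lead δ w β}

theorem leadSet_finite {B : Type} [CommRing B] (δ : Fin (n+1) →₀ ℕ)
    (W : Submodule B ({x // x ∈ Tfin δ} → B)) : (LeadSet δ W).Finite :=
  (Tfin δ).finite_toSet.subset fun β ⟨_, _, hβ, _⟩ => hβ

/-- Every nonzero truncated vector has a leading exponent. -/
theorem exists_lead {B : Type} [CommRing B] {δ : Fin (n+1) →₀ ℕ}
    {w : {x // x ∈ Tfin δ} → B} (hw : w ≠ 0) : ∃ β, Lead δ w β := by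
  have hne : {γ : Fin (n+1) →₀ ℕ | ∃ h : γ ∈ Tfin δ, w ⟨γ, h⟩ ≠ 0}.Nonempty := by
    by_contra hc
    rw [Set.not_nonempty_iff_eq_empty] at hc
    apply hw
    funext t
    by_contra ht
    exact absurd (Set.eq_empty_iff_forall_notMem.mp hc t.1) (by push_neg; exact ⟨t.2, by
      exact ht⟩)
  obtain ⟨m, ⟨hmT, hm0⟩, hmin⟩ := exists_key_min hne
  exact ⟨m, hmT, hm0, fun t ht => hmin t.1 ⟨t.2, by convert ht⟩⟩

/-- Counting: the number of leading exponents equals the dimension. -/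
theorem leadSet_ncard {B : Type} [Field B] (δ : Fin (n+1) →₀ ℕ) :
    ∀ (k : ℕ) (W : Submodule B ({x // x ∈ Tfin δ} → B)), Module.finrank B W = k →
      (LeadSet δ W).ncard = k := by
  intro k
  induction k with
  | zero =>
    intro W hW
    rw [Submodule.finrank_eq_zero.mp hW]
    have : LeadSet δ (⊥ : Submodule B ({x // x ∈ Tfin δ} → B)) = ∅ := by
      ext β
      simp only [LeadSet, Set.mem_setOf_eq, Set.mem_empty_iff_false, iff_false, not_exists]
      rintro w ⟨hw, hβ, hwβ, -⟩
      rw [Submodule.mem_bot] at hw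
      exact hwβ (by rw [hw]; rfl)
    rw [this, Set.ncard_empty]
  | succ k ih =>
    intro W hW
    -- W is nonzero
    have hWne : W ≠ ⊥ := by
      intro h
      rw [h, finrank_bot] at hW
      omega
    obtain ⟨w₀, hw₀W, hw₀⟩ := Submodule.exists_mem_ne_zero_of_ne_bot hWne
    obtain ⟨m, hm⟩ := exists_lead hw₀
    have hLne : (LeadSet δ W).Nonempty := ⟨m, w₀, hw₀W, hm⟩
    obtain ⟨β₀, ⟨w', hw'W, hw'⟩, hβ₀min⟩ := exists_key_min hLne
    obtain ⟨hβ₀T, hw'β₀, hw'min⟩ := hw'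
    set t₀ : {x // x ∈ Tfin δ} := ⟨β₀, hβ₀T⟩
    set φ : W →ₗ[B] B := (LinearMap.proj t₀).comp W.subtype with hφ
    have hsurj : Function.Surjective φ := by
      intro x
      refine ⟨(x * (w' t₀)⁻¹) • ⟨w', hw'W⟩, ?_⟩
      show (x * (w' t₀)⁻¹) * w' t₀ = x
      field_simp
    have hrange : LinearMap.range φ = ⊤ := LinearMap.range_eq_top.mpr hsurj
    have hrn := LinearMap.finrank_range_add_finrank_ker φ
    rw [hrange, finrank_top, Module.finrank_self, hW] at hrn
    have hker : Module.finrank B (LinearMap.ker φ) = k := by omega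
    set W' : Submodule B ({x // x ∈ Tfin δ} → B) := W ⊓ LinearMap.ker (LinearMap.proj t₀)
      with hW'
    have hW'rank : Module.finrank B W' = k := by
      rw [hW', ← Submodule.map_comap_subtype, ← LinearMap.ker_comp, ← hφ,
        Submodule.finrank_map_subtype_eq]
      exact hker
    have hins : LeadSet δ W = insert β₀ (LeadSet δ W') := by
      ext β
      constructor
      · rintro ⟨w, hwW, hβT, hwβ, hwmin⟩
        rcases eq_or_ne β β₀ with rfl | hne
        · exact Set.mem_insert _ _
        · refine Set.mem_insert_iff.mpr (Or.inr ⟨w, ⟨hwW, ?_⟩, hβT, hwβ, hwmin⟩)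
          show w ∈ LinearMap.ker (LinearMap.proj (R := B) (φ := fun _ => B) t₀)
          rw [LinearMap.mem_ker]
          show w t₀ = 0
          by_contra h0
          have h1 : fKey β ≤ fKey β₀ := hwmin t₀ h0
          have h2 : fKey β₀ ≤ fKey β := hβ₀min β ⟨w, hwW, hβT, hwβ, hwmin⟩
          exact hne (fKey_injective (le_antisymm h1 h2))
      · rintro (rfl | ⟨w, hwW, hl⟩)
        · exact ⟨w', hw'W, hβ₀T, hw'β₀, hw'min⟩
        · exact ⟨w, hwW.1, hl⟩
    have hnotmem : β₀ ∉ LeadSet δ W' := by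
      rintro ⟨w, hwW, hβT, hwβ, -⟩
      have : w t₀ = 0 := hwW.2
      exact hwβ (by convert this)
    rw [hins, Set.ncard_insert_of_notMem hnotmem (leadSet_finite δ W'), ih W' hW'rank]

end BMaux

namespace BMaux
open Matrix

/-- From a linearly independent family of row vectors over a field, extract a square
invertible minor. -/
theorem exists_cols_det_ne_zero {K : Type} [Field K] {k : ℕ} {T : Type} [Fintype T]
    [DecidableEq T] (u : Fin k → T → K) (hu : LinearIndependent K u) :
    ∃ cols : Fin k → T, (Matrix.of fun a b => u a (cols b)).det ≠ 0 := by
  classical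
  set N : Matrix (Fin k) T K := Matrix.of u with hN
  have hrankN : N.rank = k := by
    rw [Matrix.rank_eq_finrank_span_row]
    have hNu : LinearIndependent K N.row := hu
    rw [finrank_span_eq_card hNu, Fintype.card_fin]
  have hrankNT : Nᵀ.rank = k := by rw [Matrix.rank_transpose, hrankN]
  -- columns span a k-dimensional space
  have hspan : Module.finrank K (Submodule.span K (Set.range Nᵀ)) = k := by
    rw [show Set.range Nᵀ = Set.range Nᵀ.row from rfl, ← Matrix.rank_eq_finrank_span_row Nᵀ, hrankNT]
  obtain ⟨c, hcsub, hcspan, hcind⟩ := exists_linearIndependent K (Set.range Nᵀ)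
  have hcfin : c.Finite := Set.Finite.subset (Set.finite_range Nᵀ) hcsub
  have hcfintype : Fintype c := hcfin.fintype
  have hccard : c.toFinset.card = k := by
    have := finrank_span_set_eq_card hcind
    rw [hcspan, hspan] at this
    omega
  have hcard : Fintype.card c = k := by rw [← Set.toFinset_card]; exact hccard
  set e2 : Fin k ≃ c := (Fintype.equivFinOfCardEq hcard).symm with he2
  -- pick column indices
  have hpick : ∀ x : c, ∃ t : T, Nᵀ t = (x : Fin k → K) := fun x => hcsub x.2
  choose cols hcols using hpick
  refine ⟨fun j => cols (e2 j), ?_⟩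
  set Q : Matrix (Fin k) (Fin k) K := Matrix.of fun a b => u a (cols (e2 b)) with hQ
  have hQcols : LinearIndependent K fun j => Qᵀ j := by
    have : (fun j => Qᵀ j) = (fun x : c => (x : Fin k → K)) ∘ e2 := by
      funext j
      have := hcols (e2 j)
      funext a
      have h1 : Qᵀ j a = u a (cols (e2 j)) := rfl
      rw [h1, Function.comp_apply, ← this]
      rfl
    rw [this]
    exact hcind.comp e2 e2.injective
  have hQunit : IsUnit Q := Matrix.linearIndependent_cols_iff_isUnit.mp hQcols
  exact isUnit_iff_ne_zero.mp ((Matrix.isUnit_iff_isUnit_det Q).mp hQunit)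

/-- Rank semicontinuity under specialization. -/
theorem semicont {A : Type} [CommRing A] [IsDomain A] {K : Type} [Field K] (v : A →+* K)
    {ι T : Type} [Fintype ι] [Fintype T] [DecidableEq T] (r : ι → T → A) :
    Module.finrank K (Submodule.span K (Set.range (fun i t => v (r i t)))) ≤
      Module.finrank (FractionRing A) (Submodule.span (FractionRing A)
        (Set.range (fun i t => algebraMap A (FractionRing A) (r i t)))) := by
  classical
  set L := FractionRing A
  set img : ι → T → K := fun i t => v (r i t) with himg
  set lrow : ι → T → L := fun i t => algebraMap A L (r i t) with hlrow
  obtain ⟨b, hbsub, hbspan, hbind⟩ := exists_linearIndependent K (Set.range img)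
  have hbfin : b.Finite := Set.Finite.subset (Set.finite_range img) hbsub
  have hbfintype : Fintype b := hbfin.fintype
  have hk : Module.finrank K (Submodule.span K (Set.range img)) = b.toFinset.card := by
    rw [← hbspan, finrank_span_set_eq_card hbind]
  set k := b.toFinset.card with hkdef
  have hcardb : Fintype.card b = k := by rw [hkdef, Set.toFinset_card]
  set e : Fin k ≃ b := (Fintype.equivFinOfCardEq hcardb).symm with he
  have hpick : ∀ x : b, ∃ i : ι, img i = (x : T → K) := fun x => hbsub x.2
  choose pick hpick' using hpick
  set w : Fin k → T → A := fun a => r (pick (e a)) with hw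
  set u : Fin k → T → K := fun a t => v (w a t) with hu
  have huind : LinearIndependent K u := by
    have : u = (fun x : b => (x : T → K)) ∘ e := by
      funext a
      rw [hu]
      show img (pick (e a)) = _
      rw [hpick' (e a)]
      rfl
    rw [this]
    exact hbind.comp e e.injective
  obtain ⟨cols, hdet⟩ := exists_cols_det_ne_zero u huind
  -- transfer determinant
  set QA : Matrix (Fin k) (Fin k) A := Matrix.of fun a j => w a (cols j) with hQA
  have hdetA : QA.det ≠ 0 := by
    intro h
    apply hdet
    have : (Matrix.of fun a j => u a (cols j)) = v.mapMatrix QA := rfl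
    rw [this, ← RingHom.map_det, h, map_zero]
  have hinj : Function.Injective (algebraMap A L) := IsFractionRing.injective A L
  set QL : Matrix (Fin k) (Fin k) L := (algebraMap A L).mapMatrix QA with hQL
  have hdetL : QL.det ≠ 0 := by
    rw [hQL, ← RingHom.map_det]
    intro h
    exact hdetA (hinj (by rw [h, map_zero]))
  have hQLunit : IsUnit QL := (Matrix.isUnit_iff_isUnit_det QL).mpr (isUnit_iff_ne_zero.mpr hdetL)
  have hrowsind : LinearIndependent L fun a => QL a := Matrix.linearIndependent_rows_iff_isUnit.mpr hQLunit
  -- lift to full rows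
  set lw : Fin k → T → L := fun a => lrow (pick (e a)) with hlw
  have hlwind : LinearIndependent L lw := by
    refine LinearIndependent.of_comp (LinearMap.funLeft L L cols) ?_
    have : (LinearMap.funLeft L L cols) ∘ lw = fun a => QL a := by
      funext a
      funext j
      rfl
    rw [this]
    exact hrowsind
  -- conclude
  have hle : Submodule.span L (Set.range lw) ≤ Submodule.span L (Set.range lrow) := by
    apply Submodule.span_mono
    rintro x ⟨a, rfl⟩
    exact ⟨pick (e a), rfl⟩
  have h1 : Module.finrank L (Submodule.span L (Set.range lw)) = k := by
    rw [finrank_span_eq_card hlwind, Fintype.card_fin]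
  calc Module.finrank K (Submodule.span K (Set.range img)) = k := hk
    _ = Module.finrank L (Submodule.span L (Set.range lw)) := h1.symm
    _ ≤ Module.finrank L (Submodule.span L (Set.range lrow)) := Submodule.finrank_mono hle

end BMaux

namespace BMaux
open MvPowerSeries
variable {n : ℕ} {B B' : Type} [CommRing B] [CommRing B']

theorem map_mem_span {s : ℕ} {F : Fin s → MvPowerSeries (Fin (n+1)) B}
    (φ : B →+* B') {g : MvPowerSeries (Fin (n+1)) B} (hg : g ∈ Ideal.span (Set.range F)) :
    MvPowerSeries.map φ g ∈
      Ideal.span (Set.range fun j => MvPowerSeries.map φ (F j)) := by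
  obtain ⟨c, hc⟩ := Ideal.mem_span_range_iff_exists_fun.mp hg
  rw [← hc, map_sum]
  refine Submodule.sum_mem _ fun j _ => ?_
  rw [map_mul]
  exact Ideal.mul_mem_left _ _ (Ideal.subset_span ⟨j, rfl⟩)

theorem isInitExp_map {g : MvPowerSeries (Fin (n+1)) B} {β : Fin (n+1) →₀ ℕ}
    (φ : B →+* B') (h : IsInitExp g β) (hβ : φ (MvPowerSeries.coeff β g) ≠ 0) :
    IsInitExp (MvPowerSeries.map φ g) β := by
  refine ⟨by rwa [MvPowerSeries.coeff_map], fun γ hγ => ?_⟩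
  rw [MvPowerSeries.coeff_map] at hγ
  exact h.2 γ fun h0 => hγ (by rw [h0, map_zero])

theorem diag_map_subset {s : ℕ} {F : Fin s → MvPowerSeries (Fin (n+1)) B}
    (φ : B →+* B') (hφ : Function.Injective φ) :
    diagOf (Ideal.span (Set.range F)) ⊆
      diagOf (Ideal.span (Set.range fun j => MvPowerSeries.map φ (F j))) := by
  rintro β ⟨g, hgJ, hg0, hinit⟩
  have hβ : φ (MvPowerSeries.coeff β g) ≠ 0 := fun h =>
    hinit.1 (hφ (by rw [h, map_zero]))
  refine ⟨MvPowerSeries.map φ g, map_mem_span φ hgJ, ?_, isInitExp_map φ hinit hβ⟩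
  intro h0
  apply hβ
  rw [← MvPowerSeries.coeff_map, h0, map_zero]

theorem rows_map {s : ℕ} {δ : Fin (n+1) →₀ ℕ} (F : Fin s → MvPowerSeries (Fin (n+1)) B)
    (φ : B →+* B') (p : {x // x ∈ Tfin δ} × Fin s) (t : {x // x ∈ Tfin δ}) :
    rows δ (fun j => MvPowerSeries.map φ (F j)) p t = φ (rows δ F p t) := by
  show MvPowerSeries.coeff (R := B') (t : Fin (n+1) →₀ ℕ)
      (MvPowerSeries.monomial (p.1 : Fin (n+1) →₀ ℕ) (1 : B') * _) = _
  rw [show (MvPowerSeries.monomial (p.1 : Fin (n+1) →₀ ℕ) (1 : B')) =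
      MvPowerSeries.map φ (MvPowerSeries.monomial (p.1 : Fin (n+1) →₀ ℕ) 1) by
    rw [MvPowerSeries.map_monomial]; rw [RingHom.map_one]]
  rw [← map_mul, MvPowerSeries.coeff_map]
  rfl

end BMaux

namespace BMaux
open MvPowerSeries
variable {n : ℕ} {A : Type} [CommRing A] [IsDomain A]

theorem diag_slice_frac {s : ℕ} (F : Fin s → MvPowerSeries (Fin (n+1)) A)
    (δ : Fin (n+1) →₀ ℕ) :
    diagOf (Ideal.span (Set.range F)) ∩ Kle δ =
      diagOf (Ideal.span (Set.range fun j =>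
        MvPowerSeries.map (algebraMap A (FractionRing A)) (F j))) ∩ Kle δ := by
  set L := FractionRing A
  have hinj : Function.Injective (algebraMap A L) := IsFractionRing.injective A L
  apply Set.Subset.antisymm
  · exact fun β hβ => ⟨diag_map_subset (algebraMap A L) hinj hβ.1, hβ.2⟩
  · rintro β hβ
    have hβ' := Set.mem_of_mem_of_subset hβ (le_of_eq (diag_slice_eq_lead (B := L)))
    obtain ⟨w, hwspan, hβT, hwβ, hwmin⟩ := hβ'
    obtain ⟨c, hc⟩ := (Submodule.mem_span_range_iff_exists_fun L).mp hwspan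
    obtain ⟨b, hb⟩ := IsLocalization.exist_integer_multiples (nonZeroDivisors A)
      Finset.univ c
    choose a ha using fun p => hb p (Finset.mem_univ p)
    set P : MvPowerSeries (Fin (n+1)) A := ∑ p : {x // x ∈ Tfin δ} × Fin s,
      a p • (MvPowerSeries.monomial (p.1 : Fin (n+1) →₀ ℕ) 1 * F p.2) with hP
    have hPJ : P ∈ Ideal.span (Set.range F) := by
      refine Submodule.sum_mem _ fun p _ => Submodule.smul_of_tower_mem _ _ ?_
      exact Ideal.mul_mem_left _ _ (Ideal.subset_span ⟨p.2, rfl⟩)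
    have hkey : ∀ t : {x // x ∈ Tfin δ}, algebraMap A L (MvPowerSeries.coeff t P) =
        algebraMap A L (b : A) * w t := by
      intro t
      rw [hP, map_sum, map_sum]
      have : ∀ p : {x // x ∈ Tfin δ} × Fin s,
          algebraMap A L (MvPowerSeries.coeff t (a p •
            (MvPowerSeries.monomial (p.1 : Fin (n+1) →₀ ℕ) 1 * F p.2))) =
          algebraMap A L (b : A) * (c p * rows δ (fun j =>
            MvPowerSeries.map (algebraMap A L) (F j)) p t) := by
        intro p
        have hrA : MvPowerSeries.coeff (t : Fin (n+1) →₀ ℕ)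
            ((MvPowerSeries.monomial (p.1 : Fin (n+1) →₀ ℕ)) 1 * F p.2) = rows δ F p t := rfl
        rw [LinearMap.map_smul, smul_eq_mul, map_mul, ha p, rows_map F (algebraMap A L) p t,
          hrA, Algebra.smul_def]
        ring
      rw [Finset.sum_congr rfl fun p _ => this p, ← Finset.mul_sum]
      congr 1
      rw [← hc]
      rw [Finset.sum_apply]
      exact Finset.sum_congr rfl fun p _ => rfl
    have hbne : algebraMap A L (b : A) ≠ 0 := fun h =>
      nonZeroDivisors.coe_ne_zero b (hinj (by rw [h, map_zero]))
    have hcoeffβ : MvPowerSeries.coeff β P ≠ 0 := by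
      intro h
      have := hkey ⟨β, hβT⟩
      rw [h, map_zero] at this
      exact hwβ (by
        rcases mul_eq_zero.mp this.symm with h' | h'
        · exact absurd h' hbne
        · exact h')
    refine ⟨⟨P, hPJ, fun h0 => hcoeffβ (by rw [h0]; simp), hcoeffβ, fun γ hγ => ?_⟩,
      mem_Tfin.mp hβT⟩
    by_cases hγT : γ ∈ Tfin δ
    · refine hwmin ⟨γ, hγT⟩ fun h0 => ?_
      have := hkey ⟨γ, hγT⟩
      rw [h0, mul_zero] at this
      exact hγ (hinj (by rw [this, map_zero]))
    · exact le_trans (mem_Tfin.mp hβT)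
        (le_of_not_ge fun h => hγT (mem_Tfin.mpr h))

theorem master_counts {K : Type} [Field K] (v : A →+* K) {s : ℕ}
    (F : Fin s → MvPowerSeries (Fin (n+1)) A) (δ : Fin (n+1) →₀ ℕ) :
    ((diagOf (Ideal.span (Set.range fun j => MvPowerSeries.map v (F j)))
      ∩ Kle δ).ncard : ℕ) ≤
      (diagOf (Ideal.span (Set.range F)) ∩ Kle δ).ncard := by
  classical
  set L := FractionRing A
  have h1 : diagOf (Ideal.span (Set.range fun j => MvPowerSeries.map v (F j)))
      ∩ Kle δ = LeadSet δ (Submodule.span K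
        (Set.range (rows δ fun j => MvPowerSeries.map v (F j)))) :=
    diag_slice_eq_lead
  have h2 : diagOf (Ideal.span (Set.range F)) ∩ Kle δ = LeadSet δ (Submodule.span L
      (Set.range (rows δ fun j => MvPowerSeries.map (algebraMap A L) (F j)))) :=
    (diag_slice_frac F δ).trans diag_slice_eq_lead
  rw [h1, h2, leadSet_ncard δ _ _ rfl, leadSet_ncard δ _ _ rfl]
  have e1 : (rows δ fun j => MvPowerSeries.map v (F j)) =
      fun p t => v (rows δ F p t) := by
    funext p t
    exact rows_map F v p t
  have e2 : (rows δ fun j => MvPowerSeries.map (algebraMap A L) (F j)) =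
      fun p t => algebraMap A L (rows δ F p t) := by
    funext p t
    exact rows_map F (algebraMap A L) p t
  rw [e1, e2]
  exact semicont v (rows δ F)

end BMaux

open BMaux in
theorem bierstone_milman_generic_diagram {K A : Type} [Field K] [IsAlgClosed K]
    [CommRing A] [IsDomain A] [Algebra K A] (hA : Algebra.FiniteType K A)
    {n s : ℕ} (F : Fin s → MvPowerSeries (Fin (n + 1)) A) :
    (∀ v : A →ₐ[K] K,
      DiagLE (diagOf (Ideal.span (Set.range F)))
        (diagOf (Ideal.span (Set.range fun j =>
          MvPowerSeries.map (v : A →+* K) (F j))))) ∧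
    (∃ f₀ : A, f₀ ≠ 0 ∧
      (∀ v : A →ₐ[K] K, v f₀ ≠ 0 →
        diagOf (Ideal.span (Set.range fun j =>
            MvPowerSeries.map (v : A →+* K) (F j))) =
          diagOf (Ideal.span (Set.range F))) ∧
      (∀ β, IsVertex (diagOf (Ideal.span (Set.range F))) β →
        ∃ G ∈ Ideal.span (Set.range F), IsInitExp G β ∧
          ∀ v : A →ₐ[K] K, v f₀ ≠ 0 →
            IsInitExp (MvPowerSeries.map (v : A →+* K) G) β)) := by
  classical
  set N : Set (Fin (n+1) →₀ ℕ) := diagOf (Ideal.span (Set.range F)) with hN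
  have hstabN : ∀ β ∈ N, ∀ b, β + b ∈ N := fun β hβ b => diagOf_add_mem hβ b
  constructor
  · -- part (1)
    intro v
    refine diagLE_of_counts hstabN (fun β hβ b => diagOf_add_mem hβ b) ?_
    intro δ
    exact master_counts (v : A →+* K) F δ
  · -- part (2)
    set Vfin : Finset (Fin (n+1) →₀ ℕ) := (vmin_finite N).toFinset with hVfin
    have hrealize : ∀ β ∈ Vfin, ∃ G, G ∈ Ideal.span (Set.range F) ∧ G ≠ 0 ∧ IsInitExp G β := by
      intro β hβ
      rw [hVfin, Set.Finite.mem_toFinset] at hβ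
      obtain ⟨g, hgJ, hg0, hinit⟩ := hβ.1
      exact ⟨g, hgJ, hg0, hinit⟩
    choose G hGJ hG0 hGinit using hrealize
    set f₀ : A := ∏ β ∈ Vfin.attach, MvPowerSeries.coeff β.1 (G β.1 β.2) with hf₀
    have hf₀ne : f₀ ≠ 0 := by
      rw [hf₀, Finset.prod_ne_zero_iff]
      exact fun β _ => (hGinit β.1 β.2).1
    -- for good v, all leading coefficients survive
    have hgood : ∀ v : A →ₐ[K] K, v f₀ ≠ 0 → ∀ β (hβ : β ∈ Vfin),
        v (MvPowerSeries.coeff β (G β hβ)) ≠ 0 := by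
      intro v hv β hβ
      rw [hf₀, map_prod] at hv
      exact Finset.prod_ne_zero_iff.mp hv ⟨β, hβ⟩ (Finset.mem_attach _ _)
    have hsub : ∀ v : A →ₐ[K] K, v f₀ ≠ 0 →
        N ⊆ diagOf (Ideal.span (Set.range fun j =>
          MvPowerSeries.map (v : A →+* K) (F j))) := by
      intro v hv x hx
      obtain ⟨m, hmV, hmle⟩ := exists_vmin_le x hx
      have hmfin : m ∈ Vfin := by rw [hVfin, Set.Finite.mem_toFinset]; exact hmV
      obtain ⟨b, hb⟩ := le_iff_exists_add.mp hmle
      have hm : m ∈ diagOf (Ideal.span (Set.range fun j =>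
          MvPowerSeries.map (v : A →+* K) (F j))) := by
        refine ⟨MvPowerSeries.map (v : A →+* K) (G m hmfin),
          map_mem_span _ (hGJ m hmfin), ?_,
          isInitExp_map _ (hGinit m hmfin) (hgood v hv m hmfin)⟩
        intro h0
        apply hgood v hv m hmfin
        show ((v : A →+* K) (MvPowerSeries.coeff m (G m hmfin))) = 0
        rw [← MvPowerSeries.coeff_map, h0, map_zero]
      rw [hb]
      exact diagOf_add_mem hm b
    refine ⟨f₀, hf₀ne, ?_, ?_⟩
    · intro v hv
      exact eq_of_counts_of_subset (hsub v hv)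
        (fun δ => master_counts (v : A →+* K) F δ)
    · intro β hβ
      have hβV : β ∈ Vfin := by
        rw [hVfin, Set.Finite.mem_toFinset]
        exact isVertex_iff.mp hβ
      exact ⟨G β hβV, hGJ β hβV, hGinit β hβV,
        fun v hv => isInitExp_map _ (hGinit β hβV) (hgood v hv β hβV)⟩
end

section
/- Let B_i(φ) = {ψ ∈ ℂ[[t]]^d : ord(ψ − φ) > i} be a ball of arcs in ℂ^d. If S ∈ ℂ[[z_1,…,z_d]] is a formal power series such that ord(S(ψ(t))) ≥ k for every ψ ∈ B_i(φ) with ψ(0)=0, then the order of S at 0 satisfies m(S) ≥ k/(i+1). -/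
/- STATEMENT 17: if a formal power series `S` satisfies `ord S(ψ(t)) ≥ k` for
   every arc `ψ` in the ball `B_i(φ)`, then the order of `S` at the origin
   satisfies `m(S) ≥ k/(i+1)`, i.e. `k ≤ (i+1)·m(S)`. -/

open scoped Classical

noncomputable def arcSubst {σ : Type} [Fintype σ] [DecidableEq σ]
    (ψ : σ → PowerSeries ℂ) (f : MvPowerSeries σ ℂ) : PowerSeries ℂ :=
  PowerSeries.mk fun N => ∑ α ∈ expBox σ N,
    MvPowerSeries.coeff α f * PowerSeries.coeff N (∏ i, ψ i ^ α i)

noncomputable def pOrd (g : PowerSeries ℂ) : ℕ∞ :=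
  ⨅ (N : ℕ) (_ : PowerSeries.coeff N g ≠ 0), (N : ℕ∞)

noncomputable def aOrd {n : ℕ} (φ ψ : Fin n → PowerSeries ℂ) : ℕ∞ :=
  ⨅ j : Fin n, pOrd (φ j - ψ j)

/-- Order (multiplicity at `0`) of a multivariate formal power series. -/
noncomputable def mOrd {σ : Type} [Fintype σ] (S : MvPowerSeries σ ℂ) : ℕ∞ :=
  ⨅ (α : σ →₀ ℕ) (_ : MvPowerSeries.coeff α S ≠ 0), ((deg α : ℕ) : ℕ∞)

namespace Aux17

abbrev R (d : ℕ) := MvPolynomial (Fin d) ℂ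

/-- Basic additivity of `deg`. -/
lemma deg_add {d : ℕ} (a b : Fin d →₀ ℕ) : deg (a + b) = deg a + deg b := by
  simp [deg, Finsupp.add_apply, Finset.sum_add_distrib]

lemma deg_single {d : ℕ} (j : Fin d) (a : ℕ) : deg (Finsupp.single j a) = a := by
  simp [deg, Finsupp.single_apply]

lemma deg_zero {d : ℕ} : deg (0 : Fin d →₀ ℕ) = 0 := by simp [deg]

lemma deg_mono {d : ℕ} {a b : Fin d →₀ ℕ} (h : a ≤ b) : deg a ≤ deg b :=
  Finset.sum_le_sum fun j _ => (Finsupp.le_def.mp h) j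

lemma eq_of_le_of_deg_le {d : ℕ} {a b : Fin d →₀ ℕ} (h : a ≤ b) (hd : deg b ≤ deg a) :
    a = b := by
  by_contra hne
  have : ∃ j, a j ≠ b j := by
    by_contra hall
    push_neg at hall
    exact hne (Finsupp.ext hall)
  obtain ⟨j, hj⟩ := this
  have hlt : deg a < deg b :=
    Finset.sum_lt_sum (fun t _ => Finsupp.le_def.mp h t)
      ⟨j, Finset.mem_univ j, lt_of_le_of_ne (Finsupp.le_def.mp h j) hj⟩
  omega

/-- The main invariant: in `f`, every monomial `c^β · t^n` appearing has
`β ≤ α` and `i*|β| + |α| ≤ n`. -/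
def Ok (i : ℕ) {d : ℕ} (α : Fin d →₀ ℕ) (f : PowerSeries (R d)) : Prop :=
  ∀ (n : ℕ) (β : Fin d →₀ ℕ), MvPolynomial.coeff β (PowerSeries.coeff n f) ≠ 0 →
    β ≤ α ∧ i * deg β + deg α ≤ n

/-- The strict invariant: additionally `|β| < |α|`. -/
def Ok2 (i : ℕ) {d : ℕ} (α : Fin d →₀ ℕ) (f : PowerSeries (R d)) : Prop :=
  ∀ (n : ℕ) (β : Fin d →₀ ℕ), MvPolynomial.coeff β (PowerSeries.coeff n f) ≠ 0 →
    β ≤ α ∧ i * deg β + deg α ≤ n ∧ deg β < deg α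

lemma ok_one {i d : ℕ} : Ok i (0 : Fin d →₀ ℕ) 1 := by
  intro n β hne
  rw [PowerSeries.coeff_one] at hne
  by_cases hn : n = 0
  · subst hn
    rw [if_pos rfl] at hne
    by_cases hb : β = 0
    · subst hb; simp [deg_zero]
    · have hz : MvPolynomial.coeff β (1 : R d) = 0 := by
        rw [MvPolynomial.coeff_one, if_neg (fun hh => hb hh.symm)]
      exact absurd hz hne
  · simp [hn] at hne

lemma ok2_zero {i d : ℕ} (α : Fin d →₀ ℕ) : Ok2 i α 0 := by
  intro n β hne; simp at hne

lemma ok_mul {i d : ℕ} {α α' : Fin d →₀ ℕ} {f g : PowerSeries (R d)}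
    (hf : Ok i α f) (hg : Ok i α' g) : Ok i (α + α') (f * g) := by
  intro n β hne
  rw [PowerSeries.coeff_mul, MvPolynomial.coeff_sum] at hne
  obtain ⟨p, hp, hp0⟩ := Finset.exists_ne_zero_of_sum_ne_zero hne
  rw [MvPolynomial.coeff_mul] at hp0
  obtain ⟨q, hq, hq0⟩ := Finset.exists_ne_zero_of_sum_ne_zero hp0
  have h1 := hf p.1 q.1 (left_ne_zero_of_mul hq0)
  have h2 := hg p.2 q.2 (right_ne_zero_of_mul hq0)
  have hqe : q.1 + q.2 = β := Finset.HasAntidiagonal.mem_antidiagonal.mp hq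
  have hpe : p.1 + p.2 = n := Finset.HasAntidiagonal.mem_antidiagonal.mp hp
  constructor
  · rw [← hqe]; exact add_le_add h1.1 h2.1
  · rw [← hqe, ← hpe, deg_add, deg_add]
    have e : i * (deg q.1 + deg q.2) + (deg α + deg α')
        = (i * deg q.1 + deg α) + (i * deg q.2 + deg α') := by ring
    rw [e]
    exact add_le_add h1.2 h2.2

lemma ok2_mul_left {i d : ℕ} {α α' : Fin d →₀ ℕ} {f g : PowerSeries (R d)}
    (hf : Ok i α f) (hg : Ok2 i α' g) : Ok2 i (α + α') (f * g) := by
  intro n β hne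
  rw [PowerSeries.coeff_mul, MvPolynomial.coeff_sum] at hne
  obtain ⟨p, hp, hp0⟩ := Finset.exists_ne_zero_of_sum_ne_zero hne
  rw [MvPolynomial.coeff_mul] at hp0
  obtain ⟨q, hq, hq0⟩ := Finset.exists_ne_zero_of_sum_ne_zero hp0
  have h1 := hf p.1 q.1 (left_ne_zero_of_mul hq0)
  have h2 := hg p.2 q.2 (right_ne_zero_of_mul hq0)
  have hqe : q.1 + q.2 = β := Finset.HasAntidiagonal.mem_antidiagonal.mp hq
  have hpe : p.1 + p.2 = n := Finset.HasAntidiagonal.mem_antidiagonal.mp hp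
  refine ⟨?_, ?_, ?_⟩
  · rw [← hqe]; exact add_le_add h1.1 h2.1
  · rw [← hqe, ← hpe, deg_add, deg_add]
    have e : i * (deg q.1 + deg q.2) + (deg α + deg α')
        = (i * deg q.1 + deg α) + (i * deg q.2 + deg α') := by ring
    rw [e]
    exact add_le_add h1.2 h2.2.1
  · rw [← hqe, deg_add, deg_add]
    have := deg_mono h1.1
    have := h2.2.2
    omega

lemma ok2_mul_right {i d : ℕ} {α α' : Fin d →₀ ℕ} {f g : PowerSeries (R d)}
    (hf : Ok2 i α f) (hg : Ok i α' g) : Ok2 i (α + α') (f * g) := by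
  have := ok2_mul_left hg hf
  rw [mul_comm, add_comm]
  exact this

lemma ok2_add {i d : ℕ} {α : Fin d →₀ ℕ} {f g : PowerSeries (R d)}
    (hf : Ok2 i α f) (hg : Ok2 i α g) : Ok2 i α (f + g) := by
  intro n β hne
  rw [map_add, MvPolynomial.coeff_add] at hne
  by_cases h1 : MvPolynomial.coeff β (PowerSeries.coeff n f) ≠ 0
  · exact hf n β h1
  · push_neg at h1
    rw [h1, zero_add] at hne
    exact hg n β hne

lemma ok_pow {i d : ℕ} {γ : Fin d →₀ ℕ} {f : PowerSeries (R d)} (hf : Ok i γ f) :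
    ∀ a : ℕ, Ok i (a • γ) (f ^ a) := by
  intro a
  induction a with
  | zero => simpa using ok_one
  | succ a ih =>
    have : (a + 1) • γ = a • γ + γ := by rw [succ_nsmul]
    rw [this, pow_succ]
    exact ok_mul ih hf

lemma ok_prod {i d : ℕ} {ι : Type*} (s : Finset ι) (w : ι → Fin d →₀ ℕ)
    (f : ι → PowerSeries (R d)) (h : ∀ j ∈ s, Ok i (w j) (f j)) :
    Ok i (∑ j ∈ s, w j) (∏ j ∈ s, f j) := by
  induction s using Finset.induction with
  | empty => simpa using ok_one
  | insert a s hj ih =>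
    rw [Finset.sum_insert hj, Finset.prod_insert hj]
    exact ok_mul (h a (Finset.mem_insert_self a s))
      (ih fun j hjs => h j (Finset.mem_insert_of_mem hjs))

lemma ok2_prod_sub {i d : ℕ} {ι : Type*} (s : Finset ι) (w : ι → Fin d →₀ ℕ)
    (f g : ι → PowerSeries (R d))
    (hf : ∀ j ∈ s, Ok i (w j) (f j)) (hg : ∀ j ∈ s, Ok i (w j) (g j))
    (hfg : ∀ j ∈ s, Ok2 i (w j) (f j - g j)) :
    Ok2 i (∑ j ∈ s, w j) (∏ j ∈ s, f j - ∏ j ∈ s, g j) := by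
  induction s using Finset.induction with
  | empty => simpa using ok2_zero 0
  | insert a s hj ih =>
    rw [Finset.sum_insert hj, Finset.prod_insert hj, Finset.prod_insert hj]
    have key : f a * ∏ j ∈ s, f j - g a * ∏ j ∈ s, g j
        = f a * (∏ j ∈ s, f j - ∏ j ∈ s, g j) + (f a - g a) * ∏ j ∈ s, g j := by ring
    rw [key]
    refine ok2_add ?_ ?_
    · exact ok2_mul_left (hf a (Finset.mem_insert_self a s))
        (ih (fun j hjs => hf j (Finset.mem_insert_of_mem hjs))
            (fun j hjs => hg j (Finset.mem_insert_of_mem hjs))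
            (fun j hjs => hfg j (Finset.mem_insert_of_mem hjs)))
    · exact ok2_mul_right (hfg a (Finset.mem_insert_self a s))
        (ok_prod s w g fun j hjs => hg j (Finset.mem_insert_of_mem hjs))

section Arcs

variable {d : ℕ} (i : ℕ) (φ : Fin d → PowerSeries ℂ)

/-- The truncation of `φ j` below degree `i+1`, with coefficients viewed as constants. -/
noncomputable def A (j : Fin d) : PowerSeries (R d) :=
  PowerSeries.mk fun n =>
    if n < i + 1 then MvPolynomial.C (PowerSeries.coeff n (φ j)) else 0

/-- The generic perturbation `X_j · t^(i+1)`. -/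
noncomputable def B (j : Fin d) : PowerSeries (R d) :=
  PowerSeries.C (MvPolynomial.X j) * PowerSeries.X ^ (i + 1)

/-- The generic arc in the ball `B_i(φ)`. -/
noncomputable def Psi (j : Fin d) : PowerSeries (R d) := A i φ j + B i j

lemma coeff_B (j : Fin d) (n : ℕ) :
    PowerSeries.coeff n (B i j) = if n = i + 1 then MvPolynomial.X j else 0 := by
  rw [B, PowerSeries.coeff_C_mul, PowerSeries.coeff_X_pow]
  split <;> simp

lemma ok_B (j : Fin d) : Ok i (Finsupp.single j 1) (B i j) := by
  intro n β hne
  rw [coeff_B] at hne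
  by_cases hn : n = i + 1
  · subst hn
    rw [if_pos rfl, MvPolynomial.coeff_X'] at hne
    have hβ : Finsupp.single j 1 = β := by
      by_contra hb; simp [hb] at hne
    subst hβ
    simp [deg_single]
  · simp [hn] at hne

lemma ok2_A (hφ : ∀ j, PowerSeries.constantCoeff (φ j) = 0) (j : Fin d) :
    Ok2 i (Finsupp.single j 1) (A i φ j) := by
  intro n β hne
  rw [A, PowerSeries.coeff_mk] at hne
  by_cases hn : n < i + 1
  · rw [if_pos hn, MvPolynomial.coeff_C] at hne
    by_cases hb : β = 0
    · subst hb
      have hn0 : n ≠ 0 := by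
        intro h0
        subst h0
        rw [PowerSeries.coeff_zero_eq_constantCoeff, hφ j] at hne
        simp at hne
      refine ⟨zero_le, ?_, ?_⟩ <;> simp [deg_zero, deg_single] <;> omega
    · exact absurd (if_neg (fun hh : (0:Fin d →₀ ℕ) = β => hb hh.symm)) hne
  · simp [hn] at hne

lemma ok_Psi (hφ : ∀ j, PowerSeries.constantCoeff (φ j) = 0) (j : Fin d) :
    Ok i (Finsupp.single j 1) (Psi i φ j) := by
  intro n β hne
  rw [Psi, map_add, MvPolynomial.coeff_add] at hne
  by_cases h1 : MvPolynomial.coeff β (PowerSeries.coeff n (A i φ j)) ≠ 0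
  · obtain ⟨h, h', _⟩ := ok2_A i φ hφ j n β h1
    exact ⟨h, h'⟩
  · push_neg at h1
    rw [h1, zero_add] at hne
    exact ok_B i j n β hne

lemma ok2_Psi_sub_B (hφ : ∀ j, PowerSeries.constantCoeff (φ j) = 0) (j : Fin d) :
    Ok2 i (Finsupp.single j 1) (Psi i φ j - B i j) := by
  have : Psi i φ j - B i j = A i φ j := by rw [Psi]; ring
  rw [this]
  exact ok2_A i φ hφ j

lemma ok_pow_single {f : PowerSeries (R d)} {j : Fin d}
    (hf : Ok i (Finsupp.single j 1) f) (a : ℕ) : Ok i (Finsupp.single j a) (f ^ a) := by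
  have := ok_pow hf a
  rwa [Finsupp.smul_single, smul_eq_mul, mul_one] at this

lemma ok2_pow_sub (hφ : ∀ j, PowerSeries.constantCoeff (φ j) = 0) (j : Fin d) :
    ∀ a : ℕ, Ok2 i (Finsupp.single j a) (Psi i φ j ^ a - B i j ^ a) := by
  intro a
  induction a with
  | zero => simpa using ok2_zero 0
  | succ a ih =>
    have key : Psi i φ j ^ (a + 1) - B i j ^ (a + 1)
        = Psi i φ j * (Psi i φ j ^ a - B i j ^ a) + (Psi i φ j - B i j) * B i j ^ a := by
      ring
    have hs : Finsupp.single j (a + 1) = Finsupp.single j 1 + Finsupp.single j a := by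
      rw [← Finsupp.single_add]; ring_nf
    rw [key, hs]
    exact ok2_add (ok2_mul_left (ok_Psi i φ hφ j) ih)
      (ok2_mul_right (ok2_Psi_sub_B i φ hφ j) (ok_pow_single i (ok_B i j) a))

lemma sum_single_eq {α : Fin d →₀ ℕ} : (∑ j, Finsupp.single j (α j)) = α := by
  ext t
  rw [Finset.sum_apply']
  simp [Finsupp.single_apply]

lemma ok_prod_Psi (hφ : ∀ j, PowerSeries.constantCoeff (φ j) = 0) (α : Fin d →₀ ℕ) :
    Ok i α (∏ j, Psi i φ j ^ α j) := by
  have := ok_prod (Finset.univ) (fun j => Finsupp.single j (α j))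
    (fun j => Psi i φ j ^ α j)
    (fun j _ => ok_pow_single i (ok_Psi i φ hφ j) (α j))
  rwa [sum_single_eq] at this

lemma prod_B_pow (α : Fin d →₀ ℕ) :
    (∏ j, B i j ^ α j)
      = PowerSeries.C (∏ j, MvPolynomial.X j ^ α j)
          * PowerSeries.X ^ ((i + 1) * deg α) := by
  have e1 : ∀ j : Fin d, B i j ^ α j
      = PowerSeries.C (MvPolynomial.X j ^ α j) * PowerSeries.X ^ ((i + 1) * α j) := by
    intro j
    rw [B, mul_pow, ← map_pow, ← pow_mul]
  rw [Finset.prod_congr rfl fun j _ => e1 j, Finset.prod_mul_distrib, ← map_prod,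
    Finset.prod_pow_eq_pow_sum, ← Finset.mul_sum]
  rfl

lemma coeff_prod_B_pow (α : Fin d →₀ ℕ) :
    MvPolynomial.coeff α (PowerSeries.coeff ((i + 1) * deg α) (∏ j, B i j ^ α j))
      = 1 := by
  rw [prod_B_pow, PowerSeries.coeff_C_mul, PowerSeries.coeff_X_pow, if_pos rfl, mul_one]
  have : (∏ j, MvPolynomial.X j ^ α j : R d) = MvPolynomial.monomial α 1 := by
    rw [← MvPolynomial.prod_X_pow_eq_monomial]
    apply (Finset.prod_subset (Finset.subset_univ α.support) _).symm
    intro x _ hx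
    rw [Finsupp.notMem_support_iff] at hx
    rw [hx, pow_zero]
  rw [this, MvPolynomial.coeff_monomial, if_pos rfl]

/-- The key exact computation: coefficient of `c^α t^{(i+1)|α|}` in `∏ Ψ^α` is 1. -/
lemma coeff_prod_Psi_self (hφ : ∀ j, PowerSeries.constantCoeff (φ j) = 0)
    (α : Fin d →₀ ℕ) :
    MvPolynomial.coeff α (PowerSeries.coeff ((i + 1) * deg α) (∏ j, Psi i φ j ^ α j))
      = 1 := by
  have hdiff := ok2_prod_sub (Finset.univ) (fun j => Finsupp.single j (α j))
    (fun j => Psi i φ j ^ α j) (fun j => B i j ^ α j)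
    (fun j _ => ok_pow_single i (ok_Psi i φ hφ j) (α j))
    (fun j _ => ok_pow_single i (ok_B i j) (α j))
    (fun j _ => ok2_pow_sub i φ hφ j (α j))
  rw [sum_single_eq] at hdiff
  have hz : MvPolynomial.coeff α (PowerSeries.coeff ((i + 1) * deg α)
      (∏ j, Psi i φ j ^ α j - ∏ j, B i j ^ α j)) = 0 := by
    by_contra hne
    obtain ⟨_, _, hlt⟩ := hdiff _ _ hne
    omega
  have := coeff_prod_B_pow i α
  have expand : (∏ j, Psi i φ j ^ α j)
      = (∏ j, Psi i φ j ^ α j - ∏ j, B i j ^ α j) + ∏ j, B i j ^ α j := by ring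
  rw [expand, map_add, MvPolynomial.coeff_add, hz, zero_add, this]

/-- The key vanishing: coefficient of `c^α₀ t^{(i+1)|α₀|}` in `∏ Ψ^α` vanishes
for `α ≠ α₀`. -/
lemma coeff_prod_Psi_ne (hφ : ∀ j, PowerSeries.constantCoeff (φ j) = 0)
    (α₀ α : Fin d →₀ ℕ) (hne : α ≠ α₀) :
    MvPolynomial.coeff α₀
      (PowerSeries.coeff ((i + 1) * deg α₀) (∏ j, Psi i φ j ^ α j)) = 0 := by
  by_contra h0
  obtain ⟨hle, hdeg⟩ := ok_prod_Psi i φ hφ α ((i + 1) * deg α₀) α₀ h0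
  have h1 : deg α₀ ≤ deg α := deg_mono hle
  have h2 : deg α ≤ deg α₀ := by nlinarith [hdeg]
  exact hne (eq_of_le_of_deg_le hle h2).symm

end Arcs

end Aux17

open Aux17 in
/-- Per-exponent bound: for every `α₀` with nonzero coefficient, `k ≤ (i+1)|α₀|`. -/
lemma key_bound {d : ℕ}
    (φ : Fin d → PowerSeries ℂ) (hφ : ∀ j, PowerSeries.constantCoeff (φ j) = 0)
    (i k : ℕ) (S : MvPowerSeries (Fin d) ℂ)
    (h : ∀ ψ : Fin d → PowerSeries ℂ, (∀ j, PowerSeries.constantCoeff (ψ j) = 0) →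
      (i : ℕ∞) < aOrd ψ φ → (k : ℕ∞) ≤ pOrd (arcSubst ψ S))
    (α₀ : Fin d →₀ ℕ) (hα₀ : MvPowerSeries.coeff α₀ S ≠ 0) :
    (k : ℕ∞) ≤ (((i + 1) * deg α₀ : ℕ) : ℕ∞) := by
  set N := (i + 1) * deg α₀ with hN
  -- the generic coefficient polynomial
  set g : R d := ∑ α ∈ expBox (Fin d) N,
      MvPolynomial.C (MvPowerSeries.coeff α S)
        * PowerSeries.coeff N (∏ j, Psi i φ j ^ α j)
    with hgdef
  -- a cleaner description of the coefficients of `Psi`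
  have hPsiCoeff : ∀ (j : Fin d) (n : ℕ), PowerSeries.coeff n (Psi i φ j)
      = (if n < i + 1 then MvPolynomial.C (PowerSeries.coeff n (φ j)) else 0)
        + (if n = i + 1 then MvPolynomial.X j else 0) := by
    intro j n
    rw [Psi, map_add, coeff_B]
    congr 1
    rw [A, PowerSeries.coeff_mk]
  -- `α₀` lies in the exponent box of size `N`
  have hbox : α₀ ∈ expBox (Fin d) N := by
    rw [expBox, Finset.mem_Iic, Finsupp.le_def]
    intro j
    have h1 : α₀ j ≤ deg α₀ :=
      Finset.single_le_sum (fun t _ => Nat.zero_le (α₀ t)) (Finset.mem_univ j)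
    have h2 : (Finsupp.equivFunOnFinite.symm fun _ : Fin d => N) j = N := rfl
    have h3 : deg α₀ ≤ N := by rw [hN]; nlinarith
    omega
  -- the coefficient of `c^{α₀}` in `g` is the `α₀`-coefficient of `S`
  have hgcoeff : MvPolynomial.coeff α₀ g = MvPowerSeries.coeff α₀ S := by
    rw [hgdef, MvPolynomial.coeff_sum, Finset.sum_eq_single α₀]
    · rw [MvPolynomial.coeff_C_mul, hN, coeff_prod_Psi_self i φ hφ α₀, mul_one]
    · intro α _ hne
      rw [MvPolynomial.coeff_C_mul, hN, coeff_prod_Psi_ne i φ hφ α₀ α hne, mul_zero]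
    · intro habs
      exact absurd hbox habs
  have hg0 : g ≠ 0 := by
    intro h0
    rw [h0, MvPolynomial.coeff_zero] at hgcoeff
    exact hα₀ hgcoeff.symm
  -- choose a point where `g` does not vanish
  have hc : ∃ c : Fin d → ℂ, MvPolynomial.eval c g ≠ 0 := by
    by_contra hall
    push_neg at hall
    exact hg0 (MvPolynomial.funext fun x => by rw [map_zero]; exact hall x)
  obtain ⟨c, hc⟩ := hc
  -- the concrete arc
  set ψ : Fin d → PowerSeries ℂ :=
    fun j => PowerSeries.map (MvPolynomial.eval c) (Psi i φ j) with hψ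
  have hψcoeff : ∀ (j : Fin d) (n : ℕ), PowerSeries.coeff n (ψ j)
      = (if n < i + 1 then PowerSeries.coeff n (φ j) else 0)
        + (if n = i + 1 then c j else 0) := by
    intro j n
    rw [hψ, PowerSeries.coeff_map, hPsiCoeff, map_add]
    congr 1
    · split <;> simp
    · split <;> simp
  have hψ0 : ∀ j, PowerSeries.constantCoeff (ψ j) = 0 := by
    intro j
    rw [← PowerSeries.coeff_zero_eq_constantCoeff, hψcoeff]
    rw [if_pos (by omega), if_neg (by omega), add_zero,
      PowerSeries.coeff_zero_eq_constantCoeff, hφ j]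
  have hψball : (i : ℕ∞) < aOrd ψ φ := by
    have hlow : ((i + 1 : ℕ) : ℕ∞) ≤ aOrd ψ φ := by
      refine le_iInf fun j => le_iInf fun n => le_iInf fun hn => ?_
      refine Nat.cast_le.mpr ?_
      by_contra hcon
      push_neg at hcon
      have : PowerSeries.coeff n (ψ j - φ j) = 0 := by
        rw [map_sub, hψcoeff, if_pos (by omega), if_neg (by omega), add_zero, sub_self]
      exact hn this
    calc (i : ℕ∞) < ((i + 1 : ℕ) : ℕ∞) := Nat.cast_lt.mpr (by omega)
      _ ≤ aOrd ψ φ := hlow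
  -- the coefficient of `t^N` in `S(ψ(t))` is `eval c g`
  have harc : PowerSeries.coeff N (arcSubst ψ S) = MvPolynomial.eval c g := by
    rw [arcSubst, PowerSeries.coeff_mk, hgdef, map_sum]
    refine Finset.sum_congr rfl fun α _ => ?_
    rw [map_mul, MvPolynomial.eval_C]
    congr 1
    rw [← PowerSeries.coeff_map]
    congr 1
    rw [map_prod]
    exact Finset.prod_congr rfl fun j _ => (map_pow _ _ _).symm
  have hne : PowerSeries.coeff N (arcSubst ψ S) ≠ 0 := by rw [harc]; exact hc
  have hord : pOrd (arcSubst ψ S) ≤ (N : ℕ∞) := iInf₂_le N hne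
  exact le_trans (h ψ hψ0 hψball) hord

theorem order_lower_bound_from_ball_of_arcs {d : ℕ}
    (φ : Fin d → PowerSeries ℂ) (hφ : ∀ j, PowerSeries.constantCoeff (φ j) = 0)
    (i k : ℕ) (S : MvPowerSeries (Fin d) ℂ)
    (h : ∀ ψ : Fin d → PowerSeries ℂ, (∀ j, PowerSeries.constantCoeff (ψ j) = 0) →
      (i : ℕ∞) < aOrd ψ φ → (k : ℕ∞) ≤ pOrd (arcSubst ψ S)) :
    (k : ℕ∞) ≤ ((i : ℕ∞) + 1) * mOrd S := by
  by_cases hS : ∀ α, MvPowerSeries.coeff α S = 0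
  · have hm : mOrd S = ⊤ := by simp [mOrd, hS]
    rw [hm]
    have htop : ((i : ℕ∞) + 1) * ⊤ = ⊤ := by
      refine WithTop.mul_top ?_
      exact (ne_of_gt (lt_of_lt_of_le zero_lt_one le_add_self) : ((i : ℕ∞) + 1) ≠ 0)
    rw [htop]
    exact le_top
  · push_neg at hS
    obtain ⟨α₁, hα₁⟩ := hS
    have hTne : {n : ℕ | ∃ α, MvPowerSeries.coeff α S ≠ 0 ∧ deg α = n}.Nonempty :=
      ⟨deg α₁, α₁, hα₁, rfl⟩
    obtain ⟨α₂, hα₂, hdeg⟩ := Nat.sInf_mem hTne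
    have h1 := key_bound φ hφ i k S h α₂ hα₂
    have h2 : ((sInf {n : ℕ | ∃ α, MvPowerSeries.coeff α S ≠ 0 ∧ deg α = n} : ℕ) : ℕ∞)
        ≤ mOrd S :=
      le_iInf fun α => le_iInf fun hα => Nat.cast_le.mpr (Nat.sInf_le ⟨α, hα, rfl⟩)
    calc (k : ℕ∞) ≤ (((i + 1) * deg α₂ : ℕ) : ℕ∞) := h1
      _ = ((i : ℕ∞) + 1)
          * ((sInf {n : ℕ | ∃ α, MvPowerSeries.coeff α S ≠ 0 ∧ deg α = n} : ℕ) : ℕ∞) := by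
          rw [hdeg]; push_cast; ring
      _ ≤ ((i : ℕ∞) + 1) * mOrd S := mul_le_mul_right h2 _
end

section
/- Let P(U) = U^k + a_1 U^{k-1} + ⋯ + a_k be a monic polynomial with coefficients a_l ∈ ℂ[[t]], with discriminant Δ ∈ ℂ[[t]] nonzero of order ≤ s. If u(t), v(t) ∈ ℂ[[t]] are two roots of P with ord(u − v) > s, then u = v. -/
/- STATEMENT 18: separation of roots.  If `P = U^k + a₁U^{k-1} + ⋯ + a_k` is a
   monic polynomial over `ℂ[[t]]` whose discriminant `Δ` (the product of the
   squared differences of the roots of `P` in any field where `P` splits) is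
   nonzero of order `≤ s`, and `u, v ∈ ℂ[[t]]` are roots of `P` with
   `ord(u - v) > s`, then `u = v`. -/

open scoped Classical

set_option synthInstance.maxHeartbeats 1000000
set_option maxHeartbeats 1000000

theorem separation_of_roots {k s : ℕ} (hk : 1 ≤ k)
    (P : Polynomial (PowerSeries ℂ)) (hP : P.Monic) (hdeg : P.natDegree = k)
    (Δ : PowerSeries ℂ) (hΔ0 : Δ ≠ 0)
    -- `Δ` is the discriminant of `P`: in any field where `P` splits with roots
    -- `r₁,…,r_k`, it equals the product over pairs of squared root differences
    (hΔ : ∀ (L : Type) [Field L], ∀ (ι : PowerSeries ℂ →+* L) (r : Fin k → L),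
      Function.Injective ι →
      P.map ι = ∏ j : Fin k, (Polynomial.X - Polynomial.C (r j)) →
      ι Δ = ∏ j : Fin k, ∏ j' ∈ Finset.univ.filter (fun j' => j' < j),
        (r j' - r j) ^ 2)
    (hΔord : pOrd Δ ≤ (s : ℕ∞))
    (u v : PowerSeries ℂ)
    (hu : Polynomial.eval u P = 0) (hv : Polynomial.eval v P = 0)
    (hsep : (s : ℕ∞) < pOrd (u - v)) :
    u = v := by
  by_contra hne
  have huv0 : u - v ≠ 0 := sub_ne_zero.mpr hne
  set K := FractionRing (PowerSeries ℂ) with hK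
  set L := AlgebraicClosure K with hL
  set ι : PowerSeries ℂ →+* L := algebraMap _ _ with hιdef
  have hι : Function.Injective ι := by
    rw [hιdef, IsScalarTower.algebraMap_eq (PowerSeries ℂ) K L]
    exact (algebraMap K L).injective.comp (IsFractionRing.injective _ _)
  have hmonic : (P.map ι).Monic := hP.map ι
  have hPm0 : P.map ι ≠ 0 := hmonic.ne_zero
  have hsplit : (P.map ι).Splits := IsAlgClosed.splits _
  have hcard : (P.map ι).roots.toList.length = k := by
    rw [Multiset.length_toList, (Polynomial.splits_iff_card_roots).mp hsplit,
      hP.natDegree_map, hdeg]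
  set l := (P.map ι).roots.toList with hl
  set r : Fin k → L := fun j => l.get (Fin.cast hcard.symm j) with hr
  have hofFn : List.ofFn r = l := by
    apply List.ext_get (by simp [hcard])
    intro n h1 h2
    simp [hr, List.get_ofFn]
  have hfact : P.map ι = ∏ j, (Polynomial.X - Polynomial.C (r j)) := by
    conv_lhs => rw [hsplit.eq_prod_roots_of_monic hmonic]
    rw [← Multiset.coe_toList (P.map ι).roots, ← hl, ← hofFn]
    rw [Multiset.map_coe, Multiset.prod_coe, List.map_ofFn, List.prod_ofFn]
    rfl
  have hΔeq := hΔ L ι r hι hfact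
  have hroot : ∀ j, Polynomial.eval (r j) (P.map ι) = 0 := by
    intro j
    have hm : r j ∈ (P.map ι).roots := by
      rw [← Multiset.coe_toList (P.map ι).roots, ← hl]
      exact Multiset.mem_coe.mpr (l.get_mem _)
    exact Polynomial.isRoot_of_mem_roots hm
  have hint : ∀ j, r j ∈ integralClosure (PowerSeries ℂ) L := by
    intro j
    exact ⟨P, hP, by rw [← Polynomial.eval_map]; exact hroot j⟩
  -- ι u and ι v are among the roots
  have hidx : ∀ w : PowerSeries ℂ, Polynomial.eval w P = 0 → ∃ a : Fin k, r a = ι w := by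
    intro w hw
    have hmem : ι w ∈ (P.map ι).roots := by
      rw [Polynomial.mem_roots hPm0]
      show Polynomial.eval (ι w) (P.map ι) = 0
      rw [Polynomial.eval_map, Polynomial.eval₂_hom, hw, map_zero]
    rw [← Multiset.coe_toList (P.map ι).roots, ← hl, Multiset.mem_coe] at hmem
    obtain ⟨n, hn⟩ := List.mem_iff_get.mp hmem
    exact ⟨Fin.cast hcard n, by simp [hr, ← hn]⟩
  obtain ⟨a, ha⟩ := hidx u hu
  obtain ⟨b, hb⟩ := hidx v hv
  have hιuv : ι u ≠ ι v := fun h => hne (hι h)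
  have hab : a ≠ b := fun h => hιuv (by rw [← ha, ← hb, h])
  obtain ⟨c, d, hcd, key⟩ : ∃ c d : Fin k, c < d ∧ (r c - r d) ^ 2 = (ι u - ι v) ^ 2 := by
    rcases lt_or_gt_of_ne hab with h | h
    · exact ⟨a, b, h, by rw [ha, hb]⟩
    · exact ⟨b, a, h, by rw [ha, hb]; ring⟩
  obtain ⟨Q, hQmem, hQeq⟩ : ∃ Q ∈ integralClosure (PowerSeries ℂ) L,
      ι Δ = (ι u - ι v) ^ 2 * Q := by
    refine ⟨(∏ j' ∈ (Finset.univ.filter (fun j' => j' < d)).erase c, (r j' - r d) ^ 2) *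
      ∏ j ∈ Finset.univ.erase d, ∏ j' ∈ Finset.univ.filter (fun j' => j' < j),
        (r j' - r j) ^ 2, ?_, ?_⟩
    · exact mul_mem
        (prod_mem fun i _ => pow_mem (sub_mem (hint i) (hint d)) 2)
        (prod_mem fun j _ => prod_mem fun i _ => pow_mem (sub_mem (hint i) (hint j)) 2)
    · rw [hΔeq, ← Finset.mul_prod_erase Finset.univ _ (Finset.mem_univ d),
        ← Finset.mul_prod_erase _ _ (show c ∈ Finset.univ.filter (fun j' => j' < d) by
          simp [hcd]), key, mul_assoc]
  set β : PowerSeries ℂ →+* K := algebraMap _ _ with hβdef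
  have hβ : Function.Injective β := IsFractionRing.injective _ _
  have hβuv : β u - β v ≠ 0 := by
    rw [← map_sub]
    exact fun h => huv0 (hβ (by rw [h, map_zero]))
  have hιuv0 : ι u - ι v ≠ 0 := sub_ne_zero.mpr hιuv
  set x : K := β Δ / (β u - β v) ^ 2 with hxdef
  have htow : ∀ w : PowerSeries ℂ, ι w = algebraMap K L (β w) := fun w =>
    IsScalarTower.algebraMap_apply (PowerSeries ℂ) K L w
  have hφx : algebraMap K L x = Q := by
    rw [hxdef, map_div₀, map_pow, map_sub, ← htow, ← htow, ← htow, hQeq]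
    rw [mul_comm, mul_div_assoc, div_self (pow_ne_zero 2 hιuv0), mul_one]
  have hxint : IsIntegral (PowerSeries ℂ) x :=
    (isIntegral_algebraMap_iff (algebraMap K L).injective).mp (hφx ▸ hQmem)
  obtain ⟨w, hw⟩ := IsIntegrallyClosed.isIntegral_iff.mp hxint
  have hDelta : Δ = w * (u - v) ^ 2 := by
    apply hβ
    rw [map_mul, map_pow, map_sub, hw, hxdef,
      div_mul_cancel₀ _ (pow_ne_zero 2 hβuv)]
  have hdvd : PowerSeries.X ^ (s + 1) ∣ u - v := by
    rw [PowerSeries.X_pow_dvd_iff]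
    intro m hm
    by_contra hc
    have h1 : pOrd (u - v) ≤ (m : ℕ∞) := iInf₂_le m hc
    have h2 : (s : ℕ∞) < (m : ℕ∞) := lt_of_lt_of_le hsep h1
    have h3 : s < m := by exact_mod_cast h2
    omega
  have hdvdΔ : PowerSeries.X ^ (s + 1) ∣ Δ := by
    rw [hDelta]
    exact Dvd.dvd.mul_left (hdvd.trans (dvd_pow_self (u - v) two_ne_zero)) w
  have hbig : (s : ℕ∞) < pOrd Δ := by
    have h1 : ((s + 1 : ℕ) : ℕ∞) ≤ pOrd Δ := by
      refine le_iInf₂ fun N hN => ?_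
      have hN' : ¬ N < s + 1 := fun hlt =>
        hN (PowerSeries.X_pow_dvd_iff.mp hdvdΔ N hlt)
      exact_mod_cast Nat.le_of_not_lt hN'
    calc (s : ℕ∞) < ((s + 1 : ℕ) : ℕ∞) := by exact_mod_cast Nat.lt_succ_self s
      _ ≤ pOrd Δ := h1
  exact absurd hΔord (not_le.mpr hbig)
end

section
/- Let (X,0) ⊂ (ℂ^3,0) be the Whitney umbrella {z_1² − z_2 z_3² = 0} and φ the arc t ↦ (0, t, 0). Then for every i ≥ 1, every arc ψ on (X,0) with ord(ψ − φ) > i has image contained in the singular locus {z_1 = z_3 = 0}; hence the ball B_{X,i}(φ) does not meet R_{(X,0)}, the set of arcs on X not contained in Sing(X). In particular R_{(X,0)} is not dense in A_{(X,0)}. -/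
/- STATEMENT 19: on the Whitney umbrella `X = {z₁² - z₂z₃² = 0} ⊂ (ℂ³,0)`,
   every arc `ψ` on `(X,0)` at distance `< e^{-i}` (for any `i ≥ 1`) from the
   arc `φ : t ↦ (0,t,0)` has image contained in the singular locus
   `{z₁ = z₃ = 0}`; hence the ball `B_{X,i}(φ)` does not meet `R_{(X,0)}`,
   the set of arcs on `X` not contained in `Sing(X)`.  In particular
   `R_{(X,0)}` is not dense in `A_{(X,0)}`. -/

open scoped Classical

/-- The arc `φ : t ↦ (0, t, 0)` on the Whitney umbrella. -/
noncomputable def umbrellaArc : Fin 3 → PowerSeries ℂ :=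
  ![0, PowerSeries.X, 0]

theorem whitney_umbrella_ball_in_singular_locus (i : ℕ) (hi : 1 ≤ i)
    (ψ : Fin 3 → PowerSeries ℂ)
    (hψ0 : ∀ j, PowerSeries.constantCoeff (ψ j) = 0)
    -- `ψ` is an arc on `X = {z₁² - z₂ z₃² = 0}`
    (hψX : ψ 0 ^ 2 - ψ 1 * ψ 2 ^ 2 = 0)
    -- `ψ` lies in the ball `B_{X,i}(φ)`
    (hball : (i : ℕ∞) < aOrd ψ umbrellaArc) :
    -- the image of `ψ` is contained in the singular locus `{z₁ = z₃ = 0}`;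
    -- in particular `ψ ∉ R_{(X,0)}`, so `B_{X,i}(φ) ∩ R_{(X,0)} = ∅`
    ψ 0 = 0 ∧ ψ 2 = 0 := by
  have h1 : (i : ℕ∞) < pOrd (ψ 1 - umbrellaArc 1) :=
    lt_of_lt_of_le hball (iInf_le _ 1)
  -- coeff 1 of ψ 1 is 1
  have hc1 : PowerSeries.coeff 1 (ψ 1) = 1 := by
    by_contra h
    have hne : PowerSeries.coeff 1 (ψ 1 - umbrellaArc 1) ≠ 0 := by
      simp [umbrellaArc, PowerSeries.coeff_X, sub_eq_zero, h]
    have hle : pOrd (ψ 1 - umbrellaArc 1) ≤ (1 : ℕ∞) := le_trans (iInf_le _ 1) (iInf_le _ hne)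
    have : (i : ℕ∞) < 1 := lt_of_lt_of_le h1 hle
    exact absurd this (by exact_mod_cast Nat.not_lt.mpr hi)
  have hψ1ord : (ψ 1).order = 1 := by
    rw [show ((1:ℕ∞)) = ((1:ℕ):ℕ∞) from rfl, PowerSeries.order_eq_nat]
    refine ⟨by simp [hc1], fun j hj => ?_⟩
    interval_cases j
    simpa [PowerSeries.coeff_zero_eq_constantCoeff] using hψ0 1
  have key : ψ 2 = 0 := by
    by_contra h2
    have hψ1 : ψ 1 ≠ 0 := by
      intro h; rw [h] at hc1; simp at hc1
    have heq : ψ 0 ^ 2 = ψ 1 * ψ 2 ^ 2 := sub_eq_zero.mp hψX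
    have hrhs : ψ 1 * ψ 2 ^ 2 ≠ 0 := mul_ne_zero hψ1 (pow_ne_zero _ h2)
    have h0 : ψ 0 ≠ 0 := by
      intro h; rw [h] at heq; exact hrhs (by simpa using heq.symm)
    -- orders
    have hord : (ψ 0).order + (ψ 0).order = 1 + ((ψ 2).order + (ψ 2).order) := by
      have := congrArg PowerSeries.order heq
      rwa [sq, sq, PowerSeries.order_mul, PowerSeries.order_mul,
        PowerSeries.order_mul, hψ1ord] at this
    obtain ⟨a, ha⟩ := WithTop.ne_top_iff_exists.mp
      (PowerSeries.order_finite_iff_ne_zero.mpr h0).ne_top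
    obtain ⟨b, hb⟩ := WithTop.ne_top_iff_exists.mp
      (PowerSeries.order_finite_iff_ne_zero.mpr h2).ne_top
    rw [← ha, ← hb] at hord
    have hn : ((a + a : ℕ) : ℕ∞) = ((1 + (b + b) : ℕ) : ℕ∞) := by
      push_cast
      exact hord
    have hn' : a + a = 1 + (b + b) := Nat.cast_injective hn
    omega
  refine ⟨?_, key⟩
  have heq : ψ 0 ^ 2 = ψ 1 * ψ 2 ^ 2 := sub_eq_zero.mp hψX
  rw [key] at heq
  simpa [sq] using pow_eq_zero_iff (n := 2) (by norm_num) |>.mp (by simpa using heq)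
end
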